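/- arXiv:1304.2998 — 12 statements merged into one kernel-verified Lean document; each statement's English description precedes it below -/
import Mathlib

section
/- Let a be a real number with 0 < a < 1. Then ∫₀^π sin(ν) · log((1 − a·sin(ν))/(1 + a·sin(ν))) dν = (2π/a)·(√(1 − a²) − 1). -/
open Real


lemma aux_alg (a s t c : ℝ) (ha : 0 < a) (hs0 : 0 < s) (hs2 : s ^ 2 = 1 - a ^ 2)
    (hp1 : 0 < 1 - a * t) (hp2 : 0 < 1 + a * t) (hDD : 0 < 1 - (1 - s) * t ^ 2)
    (hpy : t ^ 2 + c ^ 2 = 1) :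
    -c * (-(a * c) / (1 - a * t) - a * c / (1 + a * t)) + 2 * (s - 1) / a * 1
      + 2 * s / a * (1 / (1 + ((s - 1) * t * c / (1 - (1 - s) * t ^ 2)) ^ 2) *
        ((((s - 1) * c * c + (s - 1) * t * (-t)) * (1 - (1 - s) * t ^ 2)
            - (s - 1) * t * c * (-((1 - s) * (2 * t * c)))) / (1 - (1 - s) * t ^ 2) ^ 2)) = 0 := by
  set D : ℝ := 1 - (1 - s) * t ^ 2 with hDdef
  have hE : (0:ℝ) < D ^ 2 + ((s - 1) * t * c) ^ 2 := by positivity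
  have h1 : 1 + ((s - 1) * t * c / D) ^ 2 = (D ^ 2 + ((s - 1) * t * c) ^ 2) / D ^ 2 := by
    field_simp
  rw [h1]
  field_simp
  linear_combination ((2)*a^2*s^2*t^4 + (-4)*a^2*s*t^4 + (2)*a^2*s*t^2 + (2)*a^2*t^4 + (-2)*a^2*t^2 + (2)*a^2 + (2)*a^2*s^2*t^2*c^2 + (-4)*a^2*s*t^2*c^2 + (2)*a^2*t^2*c^2 + (-2)*s^2*t^2 + (4)*s*t^2 + (-2)*t^2 + (2)*s^2 + (-2)*s) * hpy + ((-2)*t^2 + (2)) * hs2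


theorem integral_sin_log_I1 (a : ℝ) (h0 : 0 < a) (h1 : a < 1) :
    ∫ ν in (0 : ℝ)..π,
        Real.sin ν * Real.log ((1 - a * Real.sin ν) / (1 + a * Real.sin ν))
      = (2 * π / a) * (Real.sqrt (1 - a ^ 2) - 1) := by
  have ha2 : (0:ℝ) < 1 - a ^ 2 := by nlinarith
  set s : ℝ := Real.sqrt (1 - a ^ 2) with hsdef
  have hs0 : 0 < s := Real.sqrt_pos.mpr ha2
  have hs2 : s ^ 2 = 1 - a ^ 2 := Real.sq_sqrt ha2.le
  have hs1 : s < 1 := by nlinarith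
  have hpos1 : ∀ ν : ℝ, 0 < 1 - a * Real.sin ν := by
    intro ν
    nlinarith [Real.neg_one_le_sin ν, Real.sin_le_one ν]
  have hpos2 : ∀ ν : ℝ, 0 < 1 + a * Real.sin ν := by
    intro ν
    nlinarith [Real.neg_one_le_sin ν, Real.sin_le_one ν]
  have hD : ∀ ν : ℝ, 0 < 1 - (1 - s) * Real.sin ν ^ 2 := by
    intro ν
    nlinarith [Real.sin_sq_le_one ν, sq_nonneg (Real.sin ν)]
  set F : ℝ → ℝ := fun ν => -Real.cos ν * (Real.log (1 - a * Real.sin ν)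
      - Real.log (1 + a * Real.sin ν)) + (2 * (s - 1) / a) * ν
      + (2 * s / a) * Real.arctan ((s - 1) * Real.sin ν * Real.cos ν
          / (1 - (1 - s) * Real.sin ν ^ 2)) with hF
  have hderiv : ∀ ν ∈ Set.uIcc (0:ℝ) π,
      HasDerivAt F (Real.sin ν * Real.log ((1 - a * Real.sin ν) / (1 + a * Real.sin ν))) ν := by
    intro ν _
    rw [Real.log_div (hpos1 ν).ne' (hpos2 ν).ne']
    have hsin := Real.hasDerivAt_sin ν
    have hcos := Real.hasDerivAt_cos ν
    have d1 : HasDerivAt (fun x => Real.log (1 - a * Real.sin x))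
        ((-(a * Real.cos ν)) / (1 - a * Real.sin ν)) ν := by
      have : HasDerivAt (fun x => 1 - a * Real.sin x) (-(a * Real.cos ν)) ν := by
        simpa using ((Real.hasDerivAt_sin ν).const_mul a).const_sub 1
      exact this.log (hpos1 ν).ne'
    have d2 : HasDerivAt (fun x => Real.log (1 + a * Real.sin x))
        ((a * Real.cos ν) / (1 + a * Real.sin ν)) ν := by
      have : HasDerivAt (fun x => 1 + a * Real.sin x) (a * Real.cos ν) ν := by
        simpa using ((Real.hasDerivAt_sin ν).const_mul a).const_add 1
      exact this.log (hpos2 ν).ne'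
    have dL := d1.sub d2
    have dA := (hcos.neg.mul dL)
    have dB := ((hasDerivAt_id ν).const_mul (2 * (s - 1) / a))
    have hn : HasDerivAt (fun x => (s - 1) * Real.sin x * Real.cos x)
        (((s - 1) * Real.cos ν) * Real.cos ν + ((s - 1) * Real.sin ν) * (-Real.sin ν)) ν :=
      ((Real.hasDerivAt_sin ν).const_mul (s - 1)).mul hcos
    have hd : HasDerivAt (fun x => 1 - (1 - s) * Real.sin x ^ 2)
        (-((1 - s) * (2 * Real.sin ν * Real.cos ν))) ν := by
      have := ((Real.hasDerivAt_sin ν).pow 2).const_mul (1 - s)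
      simpa [mul_comm, mul_assoc, mul_left_comm] using this.const_sub 1
    have hq := hn.div hd (hD ν).ne'
    have dC := (hq.arctan).const_mul (2 * s / a)
    have := (dA.add dB).add dC
    refine this.congr_deriv ?_
    simp only [Pi.sub_apply, Pi.neg_apply, Pi.div_apply]
    have h := aux_alg a s (Real.sin ν) (Real.cos ν) h0 hs0 hs2 (hpos1 ν) (hpos2 ν) (hD ν)
      (Real.sin_sq_add_cos_sq ν)
    linear_combination h
  have hint : IntervalIntegrable
      (fun ν => Real.sin ν * Real.log ((1 - a * Real.sin ν) / (1 + a * Real.sin ν)))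
      MeasureTheory.volume 0 π := by
    apply Continuous.intervalIntegrable
    apply Real.continuous_sin.mul
    apply Continuous.log
    · exact (continuous_const.sub (continuous_const.mul Real.continuous_sin)).div
        (continuous_const.add (continuous_const.mul Real.continuous_sin))
        (fun ν => (hpos2 ν).ne')
    · exact fun ν => (div_pos (hpos1 ν) (hpos2 ν)).ne'
  rw [intervalIntegral.integral_eq_sub_of_hasDerivAt hderiv hint]
  simp only [hF, Real.sin_pi, Real.cos_pi, Real.sin_zero, Real.cos_zero, Real.log_one,
    mul_zero, zero_mul, mul_one, one_mul, sub_zero, zero_div, Real.arctan_zero, add_zero,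
    zero_add, sub_self, zero_pow, neg_zero]
  ring
end

section
/- Let a be a real number with 0 < a < 1. Then ∫₀^π sin(3ν) · log((1 − a·sin(ν))/(1 + a·sin(ν))) dν = (2π/(3a³)) · (4 − 3a² − (a⁴ − 5a² + 4)/√(1 − a²)). -/
open Real

lemma arctan_aux (c : ℝ) (hc0 : 0 < c) (hc1 : c < 1) (ν : ℝ) :
    HasDerivAt (fun ν => ν + arctan ((c-1)*(Real.sin ν*Real.cos ν)/(Real.cos ν^2 + c*Real.sin ν^2)))
      (c/(Real.cos ν^2 + c^2*Real.sin ν^2)) ν := by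
  have hpy := Real.sin_sq_add_cos_sq ν
  set s := Real.sin ν with hs
  set co := Real.cos ν with hco
  have hh0 : 0 < co^2 + c*s^2 := by
    nlinarith [mul_nonneg (sub_nonneg.mpr hc1.le) (sq_nonneg co)]
  have hd0 : 0 < co^2 + c^2*s^2 := by
    nlinarith [mul_nonneg (sub_nonneg.mpr (by nlinarith : c^2 ≤ 1)) (sq_nonneg co), mul_pos hc0 hc0]
  have hg : HasDerivAt (fun ν => (c-1)*(Real.sin ν*Real.cos ν))
      ((c-1)*(Real.cos ν*Real.cos ν + Real.sin ν*(-Real.sin ν))) ν :=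
    ((Real.hasDerivAt_sin ν).mul (Real.hasDerivAt_cos ν)).const_mul (c-1)
  have hhd : HasDerivAt (fun ν => Real.cos ν^2 + c*Real.sin ν^2)
      ((2*Real.cos ν^(2-1)*(-Real.sin ν)) + c*(2*Real.sin ν^(2-1)*Real.cos ν)) ν :=
    ((Real.hasDerivAt_cos ν).pow 2).add (((Real.hasDerivAt_sin ν).pow 2).const_mul c)
  have hq := (hg.div hhd hh0.ne').arctan
  have htot := (hasDerivAt_id ν).add hq
  refine HasDerivAt.congr_deriv htot (Eq.symm ?_)
  simp only [Pi.add_apply, Pi.sub_apply, Pi.neg_apply, Pi.mul_apply, Pi.div_apply]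
  simp only [← hs, ← hco, pow_one]
  set g := (c-1)*(s*co) with hgdef
  set h := co^2 + c*s^2 with hhdef
  have hA : h^2 + g^2 = co^2 + c^2*s^2 := by
    simp only [hgdef, hhdef]
    linear_combination (co^2 + c^2*s^2) * hpy
  have hB : (c-1)*(co*co + s*(-s)) * h - g * ((2*co*(-s)) + c*(2*s*co)) = c - (co^2 + c^2*s^2) := by
    simp only [hgdef, hhdef]
    linear_combination (-(c*(c-1))*s^2 + (c-1)*co^2 + c) * hpy
  have h1g : 0 < 1 + (g/h)^2 := by positivity
  field_simp
  linear_combination (c - (co^2+c^2*s^2))*hA + (-(co^2+c^2*s^2))*hB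

theorem integral_sin3_log_I2 (a : ℝ) (h0 : 0 < a) (h1 : a < 1) :
    ∫ ν in (0 : ℝ)..π,
        Real.sin (3 * ν) * Real.log ((1 - a * Real.sin ν) / (1 + a * Real.sin ν))
      = (2 * π / (3 * a ^ 3)) *
          (4 - 3 * a ^ 2 - (a ^ 4 - 5 * a ^ 2 + 4) / Real.sqrt (1 - a ^ 2)) := by
  have ha : a ≠ 0 := ne_of_gt h0
  set c := Real.sqrt (1 - a^2) with hcdef
  have hc2 : c^2 = 1 - a^2 := Real.sq_sqrt (by nlinarith)
  have hc0 : 0 < c := Real.sqrt_pos.mpr (by nlinarith)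
  have hc1 : c < 1 := by nlinarith
  have pos1 : ∀ ν : ℝ, 0 < 1 - a * Real.sin ν := by
    intro ν; nlinarith [Real.neg_one_le_sin ν, Real.sin_le_one ν]
  have pos2 : ∀ ν : ℝ, 0 < 1 + a * Real.sin ν := by
    intro ν; nlinarith [Real.neg_one_le_sin ν, Real.sin_le_one ν]
  set H : ℝ → ℝ := fun ν =>
      (-(Real.cos (3*ν)/3)) * (Real.log (1 - a*Real.sin ν) - Real.log (1 + a*Real.sin ν))
      + (-(2*a/3)) * ((-2/a^2) * (ν - Real.sin ν * Real.cos ν) + ((5*a^2-4)/a^4) * ν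
        + ((a^4-5*a^2+4)/(a^4*c)) * (ν + arctan ((c-1)*(Real.sin ν*Real.cos ν)/(Real.cos ν^2 + c*Real.sin ν^2))))
    with hHdef
  have hderiv : ∀ ν : ℝ, HasDerivAt H
      (Real.sin (3*ν) * (Real.log (1 - a*Real.sin ν) - Real.log (1 + a*Real.sin ν))) ν := by
    intro ν
    have hc3 : HasDerivAt (fun ν : ℝ => Real.cos (3*ν)) (-Real.sin (3*ν)*3) ν := by
      have := (Real.hasDerivAt_cos (3*ν)).comp ν ((hasDerivAt_id ν).const_mul 3)
      exact this.congr_deriv (by ring)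
    have hlog1 : HasDerivAt (fun ν => Real.log (1 - a*Real.sin ν))
        ((-(a*Real.cos ν))/(1 - a*Real.sin ν)) ν := by
      have := (((Real.hasDerivAt_sin ν).const_mul a).const_sub 1).log (pos1 ν).ne'
      simpa using this
    have hlog2 : HasDerivAt (fun ν => Real.log (1 + a*Real.sin ν))
        ((a*Real.cos ν)/(1 + a*Real.sin ν)) ν := by
      have := (((Real.hasDerivAt_sin ν).const_mul a).const_add 1).log (pos2 ν).ne'
      simpa using this
    have hA := ((hc3.div_const 3).neg).mul (hlog1.sub hlog2)
    have hb1 : HasDerivAt (fun ν : ℝ => ν - Real.sin ν * Real.cos ν)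
        (1 - (Real.cos ν*Real.cos ν + Real.sin ν*(-Real.sin ν))) ν :=
      (hasDerivAt_id ν).sub ((Real.hasDerivAt_sin ν).mul (Real.hasDerivAt_cos ν))
    have hb2 : HasDerivAt (fun ν : ℝ => ((5*a^2-4)/a^4) * ν) ((5*a^2-4)/a^4) ν := by
      simpa using (hasDerivAt_id ν).const_mul ((5*a^2-4)/a^4)
    have hb3 := (arctan_aux c hc0 hc1 ν).const_mul ((a^4-5*a^2+4)/(a^4*c))
    have hB := (((hb1.const_mul (-2/a^2)).add hb2).add hb3).const_mul (-(2*a/3))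
    have htot := hA.add hB
    refine HasDerivAt.congr_deriv htot (Eq.symm ?_)
    simp only [Pi.add_apply, Pi.sub_apply, Pi.neg_apply, Pi.mul_apply, Pi.div_apply]
    rw [Real.cos_three_mul ν]
    have hd : Real.cos ν^2 + c^2*Real.sin ν^2 = 1 - a^2*Real.sin ν^2 := by
      rw [hc2, Real.cos_sq']; ring
    rw [hd]
    have h3 : (1:ℝ) - a^2*Real.sin ν^2 ≠ 0 := by nlinarith [pos1 ν, pos2 ν]
    have hco2 : Real.cos ν^2 = 1 - Real.sin ν^2 := Real.cos_sq' ν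
    have hco4 : Real.cos ν^4 = (1 - Real.sin ν^2)^2 := by
      rw [show Real.cos ν^4 = (Real.cos ν^2)^2 by ring, hco2]
    field_simp [(pos1 ν).ne', (pos2 ν).ne']
    ring_nf
    rw [hco4, hco2]
    ring
  have hcont : Continuous fun ν => Real.sin (3*ν) * (Real.log (1 - a*Real.sin ν) - Real.log (1 + a*Real.sin ν)) := by
    apply Continuous.mul
    · exact Real.continuous_sin.comp (continuous_const.mul continuous_id)
    · exact ((continuous_const.sub (continuous_const.mul Real.continuous_sin)).log
        (fun x => (pos1 x).ne')).sub
        ((continuous_const.add (continuous_const.mul Real.continuous_sin)).log (fun x => (pos2 x).ne'))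
  have hInt : (∫ ν in (0:ℝ)..π, Real.sin (3 * ν) * Real.log ((1 - a * Real.sin ν) / (1 + a * Real.sin ν)))
      = ∫ ν in (0:ℝ)..π, Real.sin (3*ν) * (Real.log (1 - a*Real.sin ν) - Real.log (1 + a*Real.sin ν)) := by
    apply intervalIntegral.integral_congr
    intro ν _
    simp only [Real.log_div (pos1 ν).ne' (pos2 ν).ne']
  rw [hInt, intervalIntegral.integral_eq_sub_of_hasDerivAt (fun ν _ => hderiv ν)
    (hcont.intervalIntegrable 0 π)]
  have hc3pi : Real.cos (3*π) = -1 := by rw [Real.cos_three_mul, Real.cos_pi]; ring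
  simp only [hHdef, Real.sin_pi, Real.sin_zero, Real.cos_zero, hc3pi, mul_zero, zero_mul,
    mul_one, sub_zero, add_zero, zero_div, Real.arctan_zero, Real.log_one, zero_sub, sub_self,
    mul_zero, neg_zero, zero_add]
  field_simp
  ring
end

section
/- Let λ₀ be a real number with 0 < λ₀ < 1/2 and set a = 4λ₀/(1 + 4λ₀²). Then (1/π) ∫₀^π cos²(ν)·sin(ν) · log((1 − a·sin(ν))/(1 + a·sin(ν))) dν = −λ₀ + (4/3)·λ₀³. -/
open Real

noncomputable def Fant (a q x : ℝ) : ℝ :=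
  -(Real.cos x ^ 3) * (Real.log (1 - a * Real.sin x) - Real.log (1 + a * Real.sin x)) / 3
  - 2 * a / 3 * ((x + Real.sin x * Real.cos x) / (2 * a ^ 2) - (1 - a ^ 2) * x / a ^ 4
     + (1 - a ^ 2) ^ 2 / (a ^ 4 * q) *
       (x + Real.arctan ((q - 1) * Real.sin x * Real.cos x / (Real.cos x ^ 2 + q * Real.sin x ^ 2))))

lemma Fant_deriv (a q : ℝ) (ha0 : 0 < a) (ha1 : a < 1) (hq : q ^ 2 = 1 - a ^ 2)
    (hq0 : 0 < q) (ν : ℝ) :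
    HasDerivAt (Fant a q)
      (Real.cos ν ^ 2 * Real.sin ν *
        (Real.log (1 - a * Real.sin ν) - Real.log (1 + a * Real.sin ν))) ν := by
  have hs := Real.hasDerivAt_sin ν
  have hc := Real.hasDerivAt_cos ν
  have hpy := Real.sin_sq_add_cos_sq ν
  have hsb := Real.neg_one_le_sin ν
  have hsb' := Real.sin_le_one ν
  have h1 : (0:ℝ) < 1 - a * Real.sin ν := by nlinarith
  have h2 : (0:ℝ) < 1 + a * Real.sin ν := by nlinarith
  have h3 : (0:ℝ) < 1 - a ^ 2 * Real.sin ν ^ 2 := by nlinarith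
  have hq1 : q < 1 := by nlinarith
  have hD : (0:ℝ) < Real.cos ν ^ 2 + q * Real.sin ν ^ 2 := by nlinarith [sq_nonneg (Real.cos ν)]
  have ha : a ≠ 0 := ne_of_gt ha0
  -- log parts
  have hlog1 : HasDerivAt (fun x => Real.log (1 - a * Real.sin x))
      (-(a * Real.cos ν) / (1 - a * Real.sin ν)) ν := by
    have h : HasDerivAt (fun x => 1 - a * Real.sin x) (-(a * Real.cos ν)) ν := by
      simpa using ((hs.const_mul a).const_sub 1)
    exact h.log (ne_of_gt h1)
  have hlog2 : HasDerivAt (fun x => Real.log (1 + a * Real.sin x))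
      ((a * Real.cos ν) / (1 + a * Real.sin ν)) ν := by
    have h : HasDerivAt (fun x => 1 + a * Real.sin x) (a * Real.cos ν) ν := by
      simpa using ((hs.const_mul a).const_add 1)
    exact h.log (ne_of_gt h2)
  have hc3 : HasDerivAt (fun x => Real.cos x ^ 3) (3 * Real.cos ν ^ 2 * (-Real.sin ν)) ν := by
    simpa using hc.fun_pow 3
  -- chunk A
  have hA : HasDerivAt
      (fun x => -(Real.cos x ^ 3) * (Real.log (1 - a * Real.sin x) - Real.log (1 + a * Real.sin x)) / 3)
      (Real.cos ν ^ 2 * Real.sin ν * (Real.log (1 - a * Real.sin ν) - Real.log (1 + a * Real.sin ν))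
        + 2 * a / 3 * (Real.cos ν ^ 4 / (1 - a ^ 2 * Real.sin ν ^ 2))) ν := by
    have h := ((hc3.neg).mul (hlog1.sub hlog2)).div_const 3
    refine h.congr_deriv ?_
    symm
    simp only [Pi.sub_apply, Pi.neg_apply]
    rw [show 1 - a ^ 2 * Real.sin ν ^ 2 = (1 - a * Real.sin ν) * (1 + a * Real.sin ν) by ring]
    have n1 : 1 - a * Real.sin ν ≠ 0 := ne_of_gt h1
    have n2 : 1 + a * Real.sin ν ≠ 0 := ne_of_gt h2
    have k : -(a * Real.cos ν) / (1 - a * Real.sin ν) - a * Real.cos ν / (1 + a * Real.sin ν)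
        = -(2 * a * Real.cos ν) / ((1 - a * Real.sin ν) * (1 + a * Real.sin ν)) := by
      field_simp
      ring
    rw [k]
    field_simp
  -- arctan part
  have hN : HasDerivAt (fun x => (q - 1) * Real.sin x * Real.cos x)
      ((q - 1) * Real.cos ν * Real.cos ν + (q - 1) * Real.sin ν * (-Real.sin ν)) ν := by
    exact ((hs.const_mul (q - 1)).mul hc)
  have hDd : HasDerivAt (fun x => Real.cos x ^ 2 + q * Real.sin x ^ 2)
      (2 * Real.cos ν * (-Real.sin ν) + q * (2 * Real.sin ν * Real.cos ν)) ν := by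
    have h := (hc.pow 2).add ((hs.pow 2).const_mul q)
    refine h.congr_deriv ?_
    symm
    push_cast
    ring
  have harct : HasDerivAt
      (fun x => x + Real.arctan ((q - 1) * Real.sin x * Real.cos x / (Real.cos x ^ 2 + q * Real.sin x ^ 2)))
      (q / (1 - a ^ 2 * Real.sin ν ^ 2)) ν := by
    have h := (hasDerivAt_id ν).add ((hN.div hDd (ne_of_gt hD)).arctan)
    refine h.congr_deriv ?_
    symm
    simp only [Pi.div_apply]
    rw [show 1 - a ^ 2 * Real.sin ν ^ 2 = Real.cos ν ^ 2 + q ^ 2 * Real.sin ν ^ 2 by linear_combination (-1) * hpy - Real.sin ν ^ 2 * hq]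
    have n3 : Real.cos ν ^ 2 + q ^ 2 * Real.sin ν ^ 2 ≠ 0 := by nlinarith [sq_nonneg (Real.cos ν), sq_nonneg (q * Real.sin ν)]
    have n4 : Real.cos ν ^ 2 + q * Real.sin ν ^ 2 ≠ 0 := ne_of_gt hD
    field_simp
    linear_combination (-q * (Real.cos ν ^ 2 + q ^ 2 * Real.sin ν ^ 2) * (Real.sin ν ^ 2 + Real.cos ν ^ 2)) * hpy
  -- chunk G
  have hG : HasDerivAt
      (fun x => (x + Real.sin x * Real.cos x) / (2 * a ^ 2) - (1 - a ^ 2) * x / a ^ 4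
        + (1 - a ^ 2) ^ 2 / (a ^ 4 * q) *
          (x + Real.arctan ((q - 1) * Real.sin x * Real.cos x / (Real.cos x ^ 2 + q * Real.sin x ^ 2))))
      (Real.cos ν ^ 4 / (1 - a ^ 2 * Real.sin ν ^ 2)) ν := by
    have h := ((((hasDerivAt_id ν).add (hs.mul hc)).div_const (2 * a ^ 2)).sub
        (((hasDerivAt_id ν).const_mul (1 - a ^ 2)).div_const (a ^ 4))).add
        (harct.const_mul ((1 - a ^ 2) ^ 2 / (a ^ 4 * q)))
    refine h.congr_deriv ?_
    symm
    have n5 : 1 - a ^ 2 * Real.sin ν ^ 2 ≠ 0 := ne_of_gt h3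
    have n6 : q ≠ 0 := ne_of_gt hq0
    field_simp
    linear_combination (2 * a ^ 4 * (Real.cos ν ^ 2 + 1 - Real.sin ν ^ 2) - a ^ 2 * (1 - a ^ 2 * Real.sin ν ^ 2)) * hpy
  have h := hA.sub (hG.const_mul (2 * a / 3))
  unfold Fant
  refine h.congr_deriv ?_
  symm
  ring

theorem expectation_cos_sq_sin_log (lam0 : ℝ) (h0 : 0 < lam0) (h1 : lam0 < 1 / 2) :
    (1 / π) * ∫ ν in (0 : ℝ)..π,
        Real.cos ν ^ 2 * Real.sin ν *
          Real.log ((1 - (4 * lam0 / (1 + 4 * lam0 ^ 2)) * Real.sin ν) /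
            (1 + (4 * lam0 / (1 + 4 * lam0 ^ 2)) * Real.sin ν))
      = -lam0 + (4 / 3) * lam0 ^ 3 := by
  have hden : (0:ℝ) < 1 + 4 * lam0 ^ 2 := by positivity
  set a : ℝ := 4 * lam0 / (1 + 4 * lam0 ^ 2) with ha_def
  set q : ℝ := (1 - 4 * lam0 ^ 2) / (1 + 4 * lam0 ^ 2) with hq_def
  have ha0 : 0 < a := by positivity
  have ha1 : a < 1 := by
    rw [ha_def, div_lt_one hden]; nlinarith [sq_nonneg (1 - 2 * lam0)]
  have hq0 : 0 < q := div_pos (by nlinarith) hden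
  have hq : q ^ 2 = 1 - a ^ 2 := by
    rw [ha_def, hq_def]; field_simp; ring
  have hpos1 : ∀ ν : ℝ, 0 < 1 - a * Real.sin ν := by
    intro ν; nlinarith [Real.neg_one_le_sin ν, Real.sin_le_one ν]
  have hpos2 : ∀ ν : ℝ, 0 < 1 + a * Real.sin ν := by
    intro ν; nlinarith [Real.neg_one_le_sin ν, Real.sin_le_one ν]
  have hcongr : (∫ ν in (0:ℝ)..π,
        Real.cos ν ^ 2 * Real.sin ν *
          Real.log ((1 - a * Real.sin ν) / (1 + a * Real.sin ν)))
      = ∫ ν in (0:ℝ)..π,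
        Real.cos ν ^ 2 * Real.sin ν *
          (Real.log (1 - a * Real.sin ν) - Real.log (1 + a * Real.sin ν)) := by
    apply intervalIntegral.integral_congr
    intro ν _
    dsimp only
    rw [Real.log_div (ne_of_gt (hpos1 ν)) (ne_of_gt (hpos2 ν))]
  have hcont : Continuous fun ν : ℝ => Real.cos ν ^ 2 * Real.sin ν *
      (Real.log (1 - a * Real.sin ν) - Real.log (1 + a * Real.sin ν)) := by
    apply ((Real.continuous_cos.pow 2).mul Real.continuous_sin).mul
    exact ((continuous_const.sub (continuous_const.mul Real.continuous_sin)).log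
        (fun ν => ne_of_gt (hpos1 ν))).sub
      ((continuous_const.add (continuous_const.mul Real.continuous_sin)).log
        (fun ν => ne_of_gt (hpos2 ν)))
  have hint : (∫ ν in (0:ℝ)..π,
        Real.cos ν ^ 2 * Real.sin ν *
          (Real.log (1 - a * Real.sin ν) - Real.log (1 + a * Real.sin ν)))
      = Fant a q π - Fant a q 0 := by
    exact intervalIntegral.integral_eq_sub_of_hasDerivAt
      (fun ν _ => Fant_deriv a q ha0 ha1 hq hq0 ν) (hcont.intervalIntegrable 0 π)
  have hFpi : Fant a q π - Fant a q 0
      = -(2 * a / 3) * (π / (2 * a ^ 2) - (1 - a ^ 2) * π / a ^ 4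
          + (1 - a ^ 2) ^ 2 / (a ^ 4 * q) * π) := by
    simp [Fant, Real.sin_pi, Real.cos_pi, Real.sin_zero, Real.cos_zero]
  rw [hcongr, hint, hFpi]
  have ha : a ≠ 0 := ne_of_gt ha0
  have hqne : q ≠ 0 := ne_of_gt hq0
  have hpi : (π:ℝ) ≠ 0 := Real.pi_ne_zero
  rw [ha_def, hq_def]
  have hd : (1 + 4 * lam0 ^ 2) ≠ 0 := ne_of_gt hden
  have hl : lam0 ≠ 0 := ne_of_gt h0
  have h4 : (1 - 4 * lam0 ^ 2) ≠ 0 := by nlinarith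
  field_simp
  ring
end

section
/- Let λ₀ be a real number with 0 < λ₀ < 1/2 and set a = 4λ₀/(1 + 4λ₀²). Then (1/π) ∫₀^π sin²(ν)·cos(ν) · log((1 − a·cos(ν))/(1 + a·cos(ν))) dν = −λ₀ + (4/3)·λ₀³. -/
open Real
set_option maxHeartbeats 1000000

theorem expectation_sin_sq_cos_log (lam0 : ℝ) (h0 : 0 < lam0) (h1 : lam0 < 1 / 2) :
    (1 / π) * ∫ ν in (0 : ℝ)..π,
        Real.sin ν ^ 2 * Real.cos ν *
          Real.log ((1 - (4 * lam0 / (1 + 4 * lam0 ^ 2)) * Real.cos ν) /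
            (1 + (4 * lam0 / (1 + 4 * lam0 ^ 2)) * Real.cos ν))
      = -lam0 + (4 / 3) * lam0 ^ 3 := by
  have hd : (0:ℝ) < 1 + 4 * lam0 ^ 2 := by positivity
  have hl2 : (0:ℝ) < 1 - 4 * lam0 ^ 2 := by nlinarith
  obtain ⟨a, ha⟩ : ∃ x : ℝ, x = 4 * lam0 / (1 + 4 * lam0 ^ 2) := ⟨_, rfl⟩
  obtain ⟨b, hb⟩ : ∃ x : ℝ, x = (1 - 4 * lam0 ^ 2) / (1 + 4 * lam0 ^ 2) := ⟨_, rfl⟩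
  rw [← ha]
  have ha0 : 0 < a := by rw [ha]; positivity
  have ha1 : a < 1 := by rw [ha, div_lt_one hd]; nlinarith
  have hb0 : 0 < b := by rw [hb]; positivity
  have hb2 : b ^ 2 = 1 - a ^ 2 := by rw [ha, hb]; field_simp; ring
  have hb3 : b ^ 3 = b * (1 - a ^ 2) := by linear_combination b * hb2
  have hb4 : b ^ 4 = (1 - a ^ 2) ^ 2 := by linear_combination (b ^ 2 + 1 - a ^ 2) * hb2
  have hb5 : b ^ 5 = b * (1 - a ^ 2) ^ 2 := by linear_combination (b ^ 3 + b * (1 - a ^ 2)) * hb2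
  have hb6 : b ^ 6 = (1 - a ^ 2) ^ 3 := by
    linear_combination (b ^ 4 + b ^ 2 * (1 - a ^ 2) + (1 - a ^ 2) ^ 2) * hb2
  have hb7 : b ^ 7 = b * (1 - a ^ 2) ^ 3 := by
    linear_combination (b ^ 5 + b ^ 3 * (1 - a ^ 2) + b * (1 - a ^ 2) ^ 2) * hb2
  have hb8 : b ^ 8 = (1 - a ^ 2) ^ 4 := by
    linear_combination (b ^ 6 + b ^ 4 * (1 - a ^ 2) + b ^ 2 * (1 - a ^ 2) ^ 2 + (1 - a ^ 2) ^ 3) * hb2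
  have h1' : ∀ ν : ℝ, 0 < 1 - a * Real.cos ν := by
    intro ν
    have hc1 := Real.neg_one_le_cos ν
    have hc2 := Real.cos_le_one ν
    nlinarith
  have h2' : ∀ ν : ℝ, 0 < 1 + a * Real.cos ν := by
    intro ν
    have hc1 := Real.neg_one_le_cos ν
    have hc2 := Real.cos_le_one ν
    nlinarith
  have key : ∀ ν : ℝ, HasDerivAt (fun ν =>
      Real.sin ν ^ 3 / 3 * (Real.log (1 - a * Real.cos ν) - Real.log (1 + a * Real.cos ν))
        + (ν + Real.sin ν * Real.cos ν) / (3 * a)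
        - 2 * (2 * a ^ 2 - 1) / (3 * a ^ 3) * ν
        - 2 * b ^ 3 / (3 * a ^ 3) *
            (ν + Real.arctan ((1 - b) * (Real.sin ν * Real.cos ν) / (1 - (1 - b) * Real.cos ν ^ 2))))
      (Real.sin ν ^ 2 * Real.cos ν *
        Real.log ((1 - a * Real.cos ν) / (1 + a * Real.cos ν))) ν := by
    intro ν
    have h1 := h1' ν
    have h2 := h2' ν
    have hb1 : b < 1 := by rw [hb, div_lt_one hd]; nlinarith
    have h3 : 0 < 1 - (1 - b) * Real.cos ν ^ 2 := by
      have hc := Real.cos_sq_le_one ν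
      have hc0 := sq_nonneg (Real.cos ν)
      nlinarith
    have hs2 : Real.sin ν ^ 2 = 1 - Real.cos ν ^ 2 := Real.sin_sq ν
    have hsin4 : Real.sin ν ^ 4 = (1 - Real.cos ν ^ 2) ^ 2 := by
      linear_combination (Real.sin ν ^ 2 + 1 - Real.cos ν ^ 2) * hs2
    have hsin6 : Real.sin ν ^ 6 = (1 - Real.cos ν ^ 2) ^ 3 := by
      linear_combination (Real.sin ν ^ 4 + Real.sin ν ^ 2 * (1 - Real.cos ν ^ 2)
        + (1 - Real.cos ν ^ 2) ^ 2) * hs2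
    have P1 : HasDerivAt (fun ν => Real.sin ν ^ 3 / 3) (Real.sin ν ^ 2 * Real.cos ν) ν := by
      have := ((Real.hasDerivAt_sin ν).pow 3).div_const 3
      refine this.congr_deriv (Eq.symm ?_)
      push_cast
      ring
    have Plog : HasDerivAt (fun ν => Real.log (1 - a * Real.cos ν) - Real.log (1 + a * Real.cos ν))
        (a * Real.sin ν / (1 - a * Real.cos ν) + a * Real.sin ν / (1 + a * Real.cos ν)) ν := by
      have d1 : HasDerivAt (fun ν => 1 - a * Real.cos ν) (a * Real.sin ν) ν := by
        have := ((Real.hasDerivAt_cos ν).const_mul a).const_sub 1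
        refine this.congr_deriv (Eq.symm ?_)
        ring
      have d2 : HasDerivAt (fun ν => 1 + a * Real.cos ν) (-(a * Real.sin ν)) ν := by
        have := ((Real.hasDerivAt_cos ν).const_mul a).const_add 1
        refine this.congr_deriv (Eq.symm ?_)
        ring
      have := (d1.log h1.ne').sub (d2.log h2.ne')
      refine this.congr_deriv (Eq.symm ?_)
      ring
    have P14 := P1.mul Plog
    have P2 : HasDerivAt (fun ν => (ν + Real.sin ν * Real.cos ν) / (3 * a))
        (2 * Real.cos ν ^ 2 / (3 * a)) ν := by
      have := ((hasDerivAt_id ν).add ((Real.hasDerivAt_sin ν).mul (Real.hasDerivAt_cos ν))).div_const (3 * a)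
      refine this.congr_deriv (Eq.symm ?_)
      rw [div_eq_div_iff (by linarith) (by linarith)]
      linear_combination (3 * a) * hs2
    have P3 : HasDerivAt (fun ν => 2 * (2 * a ^ 2 - 1) / (3 * a ^ 3) * ν)
        (2 * (2 * a ^ 2 - 1) / (3 * a ^ 3)) ν := by
      simpa using (hasDerivAt_id ν).const_mul (2 * (2 * a ^ 2 - 1) / (3 * a ^ 3))
    have P4 : HasDerivAt (fun ν => 2 * b ^ 3 / (3 * a ^ 3) *
        (ν + Real.arctan ((1 - b) * (Real.sin ν * Real.cos ν) / (1 - (1 - b) * Real.cos ν ^ 2))))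
        (2 * b ^ 3 / (3 * a ^ 3) *
          (b / ((1 - a * Real.cos ν) * (1 + a * Real.cos ν)))) ν := by
      have dN : HasDerivAt (fun ν => (1 - b) * (Real.sin ν * Real.cos ν))
          ((1 - b) * (Real.cos ν * Real.cos ν + Real.sin ν * (-Real.sin ν))) ν :=
        ((Real.hasDerivAt_sin ν).mul (Real.hasDerivAt_cos ν)).const_mul (1 - b)
      have dD : HasDerivAt (fun ν => 1 - (1 - b) * Real.cos ν ^ 2)
          ((1 - b) * (2 * Real.cos ν * Real.sin ν)) ν := by
        have := (((Real.hasDerivAt_cos ν).pow 2).const_mul (1 - b)).const_sub 1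
        refine this.congr_deriv (Eq.symm ?_)
        push_cast
        ring
      have dg := dN.div dD h3.ne'
      have total4 := ((hasDerivAt_id ν).add dg.arctan).const_mul (2 * b ^ 3 / (3 * a ^ 3))
      refine total4.congr_deriv (Eq.symm ?_)
      have h5 : (1 + ((1 - b) * (Real.sin ν * Real.cos ν) / (1 - (1 - b) * Real.cos ν ^ 2)) ^ 2) ≠ 0 := by
        positivity
      simp only [Pi.div_apply]
      have e1 := h1.ne'
      have e2 := h2.ne'
      have e3 := h3.ne'
      have e4 := ha0.ne'
      have e6 : 1 - Real.cos ν ^ 2 * (1 - b) ≠ 0 := by linarith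
      field_simp
      rw [hs2]
      field_simp
      ring_nf
      simp only [hb8, hb7, hb6, hb5, hb4, hb3, hb2]
      ring_nf
    have total := ((P14.add P2).sub P3).sub P4
    refine total.congr_deriv (Eq.symm ?_)
    rw [Real.log_div h1.ne' h2.ne']
    have e1 := h1.ne'
    have e2 := h2.ne'
    have e4 := ha0.ne'
    have e7 : 1 - Real.cos ν * a ≠ 0 := by linarith
    have e8 : 1 + Real.cos ν * a ≠ 0 := by linarith
    field_simp
    rw [hs2]
    ring_nf
    simp only [hb8, hb7, hb6, hb5, hb4, hb3, hb2]
    ring_nf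
  have hcont : Continuous (fun ν : ℝ => Real.sin ν ^ 2 * Real.cos ν *
      Real.log ((1 - a * Real.cos ν) / (1 + a * Real.cos ν))) := by
    apply Continuous.mul
    · exact (Real.continuous_sin.pow 2).mul Real.continuous_cos
    · apply Continuous.log
      · exact (continuous_const.sub (continuous_const.mul Real.continuous_cos)).div
          (continuous_const.add (continuous_const.mul Real.continuous_cos)) (fun x => (h2' x).ne')
      · exact fun x => div_ne_zero (h1' x).ne' (h2' x).ne'
  rw [intervalIntegral.integral_eq_sub_of_hasDerivAt (fun x _ => key x)
    (hcont.intervalIntegrable 0 π)]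
  norm_num [Real.sin_pi, Real.cos_pi, Real.sin_zero, Real.cos_zero, Real.arctan_zero]
  rw [ha, hb]
  have hπ := Real.pi_ne_zero
  have h40 : (4:ℝ) * lam0 ≠ 0 := by positivity
  field_simp
  ring
end

section
/- Let b be a nonzero real number. Then ∫₀^{π/2} cos(ν) · arctan(b·cos(ν)) dν = (π/(2b)) · (√(b² + 1) − 1). -/
open Real MeasureTheory

lemma hasDerivAt_K_aux (t : ℝ) (ht : t ≠ 0) (ν : ℝ) :
    HasDerivAt (fun ν : ℝ =>
        ν / (Real.sqrt (t^2+1) * (Real.sqrt (t^2+1) + 1)) +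
        (1 / (t^2 * Real.sqrt (t^2+1))) *
          Real.arctan ((Real.sqrt (t^2+1) - 1) * Real.sin ν * Real.cos ν /
            (Real.sqrt (t^2+1) * Real.cos ν ^ 2 + Real.sin ν ^ 2)))
      (Real.cos ν ^ 2 / (1 + t^2 * Real.cos ν ^ 2)) ν := by
  set c := Real.sqrt (t^2+1) with hc
  have hc1 : 1 ≤ c := by
    rw [hc]
    nlinarith [Real.sq_sqrt (by positivity : (0:ℝ) ≤ t^2+1), Real.sqrt_nonneg (t^2+1), sq_nonneg t]
  have hc2 : c ^ 2 = t ^ 2 + 1 := Real.sq_sqrt (by positivity)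
  have hD : c * Real.cos ν ^ 2 + Real.sin ν ^ 2 ≠ 0 := by
    have := Real.sin_sq_add_cos_sq ν
    nlinarith [sq_nonneg (Real.cos ν), sq_nonneg (Real.sin ν)]
  have hu : HasDerivAt (fun ν => (c - 1) * Real.sin ν * Real.cos ν)
      ((c - 1) * (Real.cos ν ^ 2 - Real.sin ν ^ 2)) ν := by
    have := ((Real.hasDerivAt_sin ν).const_mul (c-1)).mul (Real.hasDerivAt_cos ν)
    refine this.congr_deriv ?_
    ring
  have hv : HasDerivAt (fun ν => c * Real.cos ν ^ 2 + Real.sin ν ^ 2)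
      (c * (2 * Real.cos ν * (-Real.sin ν)) + 2 * Real.sin ν * Real.cos ν) ν := by
    have h1 := (((Real.hasDerivAt_cos ν).pow 2).const_mul c)
    have h2 := ((Real.hasDerivAt_sin ν).pow 2)
    refine (h1.add h2).congr_deriv ?_
    norm_num
  have hA := (hu.div hv hD).arctan
  have hmain := (((hasDerivAt_id ν).div_const (c * (c+1))).add (hA.const_mul (1 / (t^2 * c))))
  refine hmain.congr_deriv ?_
  symm
  simp only [Pi.div_apply]
  have hs : Real.sin ν ^ 2 = 1 - Real.cos ν ^ 2 := Real.sin_sq ν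
  have ht2 : (0:ℝ) < 1 + t^2 * Real.cos ν ^ 2 := by positivity
  have hc0 : c ≠ 0 := by linarith
  have hc10 : c + 1 ≠ 0 := by linarith
  have hts : t ^ 2 = c ^ 2 - 1 := by linarith
  have hs4 : Real.sin ν ^ 4 = (1 - Real.cos ν ^ 2) ^ 2 := by rw [← hs]; ring
  have hsc := Real.sin_sq_add_cos_sq ν
  have hE : 1 + ((c - 1) * Real.sin ν * Real.cos ν / (c * Real.cos ν ^ 2 + Real.sin ν ^ 2)) ^ 2
      = (1 + t ^ 2 * Real.cos ν ^ 2) / (c * Real.cos ν ^ 2 + Real.sin ν ^ 2) ^ 2 := by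
    rw [div_pow, one_add_div (pow_ne_zero 2 hD)]
    congr 1
    linear_combination (c ^ 2 * Real.cos ν ^ 2 + Real.sin ν ^ 2 + 1) * hsc + Real.cos ν ^ 2 * hc2
  have hN : (c - 1) * (Real.cos ν ^ 2 - Real.sin ν ^ 2) * (c * Real.cos ν ^ 2 + Real.sin ν ^ 2) -
      (c - 1) * Real.sin ν * Real.cos ν *
        (c * (2 * Real.cos ν * -Real.sin ν) + 2 * Real.sin ν * Real.cos ν)
      = (c - 1) * ((c + 1) * Real.cos ν ^ 2 - 1) := by
    linear_combination (-(c - 1) * (Real.sin ν ^ 2 + 1 - c * Real.cos ν ^ 2)) * hsc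
  rw [hE, hN, one_div_div, div_mul_div_comm, mul_comm ((c * Real.cos ν ^ 2 + Real.sin ν ^ 2) ^ 2),
    mul_div_mul_right _ _ (pow_ne_zero 2 hD)]
  have ht2' : 1 + (c ^ 2 - 1) * Real.cos ν ^ 2 ≠ 0 := by rw [← hts]; exact ht2.ne'
  have hc3 : c ^ 2 - 1 ≠ 0 := by rw [← hts]; positivity
  rw [hts, div_eq_iff ht2', add_mul, mul_assoc, div_mul_cancel₀ _ ht2']
  field_simp
  ring

lemma inner_int_aux (t : ℝ) :
    ∫ ν in (0:ℝ)..(π/2), Real.cos ν ^ 2 / (1 + t^2 * Real.cos ν ^ 2)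
      = π / (2 * (Real.sqrt (t^2+1) * (Real.sqrt (t^2+1) + 1))) := by
  rcases eq_or_ne t 0 with rfl | ht
  · simp only [ne_eq, OfNat.ofNat_ne_zero, not_false_eq_true, zero_pow, zero_mul, add_zero,
      div_one]
    rw [integral_cos_sq]
    simp [Real.sqrt_one]
    ring
  · have hD : ∀ ν : ℝ, (1 : ℝ) + t^2 * Real.cos ν ^ 2 ≠ 0 := fun ν => by positivity
    have hcont : Continuous (fun ν : ℝ => Real.cos ν ^ 2 / (1 + t^2 * Real.cos ν ^ 2)) := by
      apply Continuous.div (by fun_prop) (by fun_prop)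
      intro ν; exact hD ν
    rw [intervalIntegral.integral_eq_sub_of_hasDerivAt
      (fun ν _ => hasDerivAt_K_aux t ht ν) (hcont.intervalIntegrable _ _)]
    have hc1 : 1 ≤ Real.sqrt (t^2+1) := by
      nlinarith [Real.sq_sqrt (by positivity : (0:ℝ) ≤ t^2+1), Real.sqrt_nonneg (t^2+1),
        sq_nonneg t]
    set c := Real.sqrt (t^2+1) with hcdef
    have h0 : (0:ℝ) < c := lt_of_lt_of_le one_pos hc1
    simp [Real.sin_pi_div_two, Real.cos_pi_div_two]
    field_simp

lemma outer_int_aux (b : ℝ) (hb : b ≠ 0) :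
    ∫ t in (0:ℝ)..b, π / (2 * (Real.sqrt (t^2+1) * (Real.sqrt (t^2+1) + 1)))
      = (π / (2 * b)) * (Real.sqrt (b ^ 2 + 1) - 1) := by
  have hder : ∀ t : ℝ, HasDerivAt (fun t : ℝ => (π/2) * (t / (1 + Real.sqrt (t^2+1))))
      (π / (2 * (Real.sqrt (t^2+1) * (Real.sqrt (t^2+1) + 1)))) t := by
    intro t
    have hc2 : Real.sqrt (t^2+1) ^ 2 = t ^ 2 + 1 := Real.sq_sqrt (by positivity)
    have hcpos : 0 < Real.sqrt (t^2+1) := Real.sqrt_pos.mpr (by positivity)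
    have hsq : HasDerivAt (fun t : ℝ => Real.sqrt (t^2+1)) (t / Real.sqrt (t^2+1)) t := by
      have h := (((hasDerivAt_id t).pow 2).add_const 1).sqrt (by simp; positivity)
      refine h.congr_deriv ?_
      norm_num
      field_simp
    have h1 : HasDerivAt (fun t : ℝ => (1:ℝ) + Real.sqrt (t^2+1))
        (t / Real.sqrt (t^2+1)) t := hsq.const_add 1
    have h2 := ((hasDerivAt_id t).div h1 (by positivity)).const_mul (π/2)
    refine h2.congr_deriv ?_
    symm
    set c := Real.sqrt (t^2+1) with hcdef
    have hc0 : c ≠ 0 := ne_of_gt hcpos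
    have hc10 : (1:ℝ) + c ≠ 0 := by positivity
    simp only [id_eq]
    field_simp
    first
      | linear_combination (-2*π*c*(c+1)) * hc2
      | linear_combination (2*π*c*(c+1)) * hc2
      | nlinarith [hc2, hcpos]
  rw [intervalIntegral.integral_eq_sub_of_hasDerivAt (fun t _ => hder t) ?_]
  · have hc2 : Real.sqrt (b^2+1) ^ 2 = b ^ 2 + 1 := Real.sq_sqrt (by positivity)
    have hcpos : 0 < Real.sqrt (b^2+1) := Real.sqrt_pos.mpr (by positivity)
    rw [show Real.sqrt ((0:ℝ)^2+1) = 1 by norm_num]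
    set c := Real.sqrt (b^2+1) with hcdef
    have hc0 : c ≠ 0 := ne_of_gt hcpos
    have hc10 : (1:ℝ) + c ≠ 0 := by positivity
    field_simp
    first
      | linear_combination (-2*π) * hc2
      | linear_combination (2*π) * hc2
      | nlinarith [hc2, hcpos]
  · apply Continuous.intervalIntegrable
    apply Continuous.div continuous_const (by fun_prop)
    intro t
    have : 0 < Real.sqrt (t^2+1) := Real.sqrt_pos.mpr (by positivity)
    positivity

lemma pointwise_aux (b : ℝ) (ν : ℝ) :
    Real.cos ν * Real.arctan (b * Real.cos ν)
      = ∫ t in (0:ℝ)..b, Real.cos ν ^ 2 / (1 + t^2 * Real.cos ν ^ 2) := by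
  have hder : ∀ t : ℝ, HasDerivAt (fun t : ℝ => Real.cos ν * Real.arctan (t * Real.cos ν))
      (Real.cos ν ^ 2 / (1 + t^2 * Real.cos ν ^ 2)) t := by
    intro t
    have h1 : HasDerivAt (fun t : ℝ => t * Real.cos ν) (Real.cos ν) t := by
      simpa using (hasDerivAt_id t).mul_const (Real.cos ν)
    have h2 := (h1.arctan).const_mul (Real.cos ν)
    refine h2.congr_deriv ?_
    symm
    have hpos : (0:ℝ) < 1 + t^2 * Real.cos ν ^ 2 := by positivity
    have h3 : 1 + (t * Real.cos ν) ^ 2 = 1 + t^2 * Real.cos ν ^ 2 := by ring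
    rw [h3]
    field_simp
  have hcont : Continuous (fun t : ℝ => Real.cos ν ^ 2 / (1 + t^2 * Real.cos ν ^ 2)) := by
    apply Continuous.div (by fun_prop) (by fun_prop)
    intro t; positivity
  rw [intervalIntegral.integral_eq_sub_of_hasDerivAt (fun t _ => hder t)
    (hcont.intervalIntegrable _ _)]
  simp

lemma swap_aux (f : ℝ → ℝ → ℝ) (hc : Continuous (Function.uncurry f)) (a b : ℝ)
    (ha : 0 ≤ a) (hb : 0 ≤ b) :
    ∫ x in (0:ℝ)..a, ∫ y in (0:ℝ)..b, f x y = ∫ y in (0:ℝ)..b, ∫ x in (0:ℝ)..a, f x y := by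
  have hint : Integrable (Function.uncurry f)
      ((volume.restrict (Set.Ioc 0 a)).prod (volume.restrict (Set.Ioc 0 b))) := by
    rw [Measure.prod_restrict]
    exact ((hc.continuousOn).integrableOn_compact (isCompact_Icc.prod isCompact_Icc)).mono_set
      (Set.prod_mono Set.Ioc_subset_Icc_self Set.Ioc_subset_Icc_self)
  simp only [intervalIntegral.integral_of_le ha, intervalIntegral.integral_of_le hb]
  exact MeasureTheory.integral_integral_swap hint

lemma key_aux (b : ℝ) (hb : 0 < b) :
    ∫ ν in (0 : ℝ)..(π / 2), Real.cos ν * Real.arctan (b * Real.cos ν)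
      = (π / (2 * b)) * (Real.sqrt (b ^ 2 + 1) - 1) := by
  have hπ : (0:ℝ) ≤ π / 2 := by positivity
  have hcont2 : Continuous (Function.uncurry fun ν t : ℝ =>
      Real.cos ν ^ 2 / (1 + t^2 * Real.cos ν ^ 2)) := by
    apply Continuous.div (by fun_prop) (by fun_prop)
    intro p; positivity
  calc ∫ ν in (0 : ℝ)..(π / 2), Real.cos ν * Real.arctan (b * Real.cos ν)
      = ∫ ν in (0:ℝ)..(π/2), ∫ t in (0:ℝ)..b,
          Real.cos ν ^ 2 / (1 + t^2 * Real.cos ν ^ 2) := by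
        apply intervalIntegral.integral_congr
        intro ν _
        exact pointwise_aux b ν
    _ = ∫ t in (0:ℝ)..b, ∫ ν in (0:ℝ)..(π/2),
          Real.cos ν ^ 2 / (1 + t^2 * Real.cos ν ^ 2) :=
        swap_aux _ hcont2 _ _ hπ hb.le
    _ = ∫ t in (0:ℝ)..b, π / (2 * (Real.sqrt (t^2+1) * (Real.sqrt (t^2+1) + 1))) := by
        apply intervalIntegral.integral_congr
        intro t _
        exact inner_int_aux t
    _ = (π / (2 * b)) * (Real.sqrt (b ^ 2 + 1) - 1) := outer_int_aux b hb.ne'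

theorem integral_cos_arctan (b : ℝ) (hb : b ≠ 0) :
    ∫ ν in (0 : ℝ)..(π / 2), Real.cos ν * Real.arctan (b * Real.cos ν)
      = (π / (2 * b)) * (Real.sqrt (b ^ 2 + 1) - 1) := by
  rcases hb.lt_or_gt with hneg | hpos
  · have hB : (0:ℝ) < -b := by linarith
    have key' := key_aux (-b) hB
    have h1 : ∫ ν in (0 : ℝ)..(π / 2), Real.cos ν * Real.arctan (b * Real.cos ν)
        = -∫ ν in (0 : ℝ)..(π / 2), Real.cos ν * Real.arctan ((-b) * Real.cos ν) := by
      rw [← intervalIntegral.integral_neg]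
      apply intervalIntegral.integral_congr
      intro x _
      simp only
      rw [show (-b) * Real.cos x = -(b * Real.cos x) by ring, Real.arctan_neg]
      ring
    rw [h1, key']
    rw [show (-b)^2 = b^2 by ring]
    field_simp
    try ring
  · exact key_aux b hpos
end

section
/- Let b be a nonzero real number. Then ∫₀^{π/2} cos(3ν) · arctan(b·cos(ν)) dν = (π/(6b³)) · (3b² + 4 − (b⁴ + 5b² + 4)/√(b² + 1)). -/
open Real

theorem integral_cos3_arctan (b : ℝ) (hb : b ≠ 0) :
    ∫ ν in (0 : ℝ)..(π / 2), Real.cos (3 * ν) * Real.arctan (b * Real.cos ν)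
      = (π / (6 * b ^ 3)) *
          (3 * b ^ 2 + 4 - (b ^ 4 + 5 * b ^ 2 + 4) / Real.sqrt (b ^ 2 + 1)) := by
  have hb2 : (0:ℝ) ≤ b ^ 2 + 1 := by positivity
  set c := Real.sqrt (b ^ 2 + 1) with hcdef
  have hcsq : c ^ 2 = b ^ 2 + 1 := Real.sq_sqrt hb2
  have hc0 : 0 ≤ c := Real.sqrt_nonneg _
  have hc1 : 1 ≤ c := by nlinarith [sq_nonneg b]
  set F : ℝ → ℝ := fun ν =>
    Real.sin (3*ν)/3 * Real.arctan (b * Real.cos ν)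
    + b/3 * ((-4/b^2) * (ν/2 + Real.sin (2*ν)/4) + (5*b^2+4)/b^4 * ν
      - (b^4+5*b^2+4)/b^4 * (1/c) *
        (ν - Real.arctan ((c-1) * (Real.sin ν * Real.cos ν) / (c * Real.cos ν^2 + Real.sin ν^2))))
    with hFdef
  have key : ∀ ν : ℝ, HasDerivAt F (Real.cos (3*ν) * Real.arctan (b * Real.cos ν)) ν := by
    intro ν
    have hs := Real.hasDerivAt_sin ν
    have hw := Real.hasDerivAt_cos ν
    have hsc := Real.sin_sq_add_cos_sq ν
    have hden_pos : 0 < c * Real.cos ν ^ 2 + Real.sin ν ^ 2 := by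
      nlinarith [sq_nonneg (Real.cos ν)]
    have hbw_pos : 0 < 1 + b ^ 2 * Real.cos ν ^ 2 := by positivity
    have hnum : HasDerivAt (fun ν => (c-1) * (Real.sin ν * Real.cos ν))
        ((c-1) * (Real.cos ν * Real.cos ν + Real.sin ν * (-Real.sin ν))) ν :=
      (hs.mul hw).const_mul (c-1)
    have hden : HasDerivAt (fun ν => c * Real.cos ν ^ 2 + Real.sin ν ^ 2)
        (c * ((2:ℕ) * Real.cos ν ^ 1 * (-Real.sin ν)) + (2:ℕ) * Real.sin ν ^ 1 * Real.cos ν) ν :=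
      ((hw.pow 2).const_mul c).add (hs.pow 2)
    have hu : HasDerivAt (fun ν => ν - Real.arctan ((c-1) * (Real.sin ν * Real.cos ν) / (c * Real.cos ν ^ 2 + Real.sin ν ^ 2)))
        (c / (1 + b ^ 2 * Real.cos ν ^ 2)) ν := by
      have h := (hasDerivAt_id ν).sub ((hnum.div hden hden_pos.ne').arctan)
      refine h.congr_deriv ?_
      have hs2 : Real.sin ν ^ 2 = 1 - Real.cos ν ^ 2 := Real.sin_sq ν
      have h1ne : (1 + ((c - 1) * (Real.sin ν * Real.cos ν) / (c * Real.cos ν ^ 2 + Real.sin ν ^ 2)) ^ 2) ≠ 0 := by positivity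
      simp only [Pi.div_apply]
      field_simp
      rw [hs2, show b ^ 2 = c ^ 2 - 1 by linarith]; ring
    have h3 : HasDerivAt (fun ν => Real.sin (3*ν)) (Real.cos (3*ν) * (3*1)) ν :=
      HasDerivAt.sin ((hasDerivAt_id ν).const_mul 3)
    have h2 : HasDerivAt (fun ν => Real.sin (2*ν)) (Real.cos (2*ν) * (2*1)) ν :=
      HasDerivAt.sin ((hasDerivAt_id ν).const_mul 2)
    have harct : HasDerivAt (fun ν => Real.arctan (b * Real.cos ν))
        (1 / (1 + (b * Real.cos ν) ^ 2) * (b * -Real.sin ν)) ν :=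
      (hw.const_mul b).arctan
    have hall := ((h3.div_const 3).mul harct).add
      ((((((hasDerivAt_id ν).div_const 2).add (h2.div_const 4)).const_mul ((-4:ℝ)/b^2)).add
          ((hasDerivAt_id ν).const_mul ((5*b^2+4)/b^4)) |>.sub
        (hu.const_mul ((b^4+5*b^2+4)/b^4 * (1/c)))).const_mul (b/3))
    refine hall.congr_deriv ?_
    have hs2 : Real.sin ν ^ 2 = 1 - Real.cos ν ^ 2 := Real.sin_sq ν
    rw [Real.sin_three_mul, Real.cos_two_mul]
    field_simp
    rw [hs2]; ring
  have hcont : IntervalIntegrable (fun ν => Real.cos (3*ν) * Real.arctan (b * Real.cos ν))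
      MeasureTheory.volume 0 (π/2) := by
    exact (Continuous.intervalIntegrable ((Real.continuous_cos.comp (continuous_const.mul continuous_id)).mul
      (Real.continuous_arctan.comp (continuous_const.mul Real.continuous_cos))) _ _)
  rw [intervalIntegral.integral_eq_sub_of_hasDerivAt (fun ν _ => key ν) hcont]
  have h1 : Real.sin (3*(π/2)) = -1 := by
    rw [show 3*(π/2) = π + π/2 by ring, Real.sin_add]; simp
  have h2 : Real.sin (2*(π/2)) = 0 := by
    rw [show 2*(π/2) = π by ring]; simp
  have hcne : c ≠ 0 := by linarith
  rw [hFdef]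
  simp only [Real.cos_pi_div_two, Real.sin_pi_div_two, h1, h2, mul_zero, zero_mul,
    Real.sin_zero, Real.cos_zero, Real.arctan_zero, zero_div, mul_one]
  field_simp
  ring
end

section
/- Let λ₀ be a real number with 0 < λ₀ < 1/2. Then (1/π) ∫₀^π |cos(ν)| · arctan(4λ₀·|cos(ν)|/(4λ₀² − 1)) dν = −2λ₀. -/
open Real

lemma hasDerivAt_G (k c : ℝ) (hk : k ≠ 0) (hc : 0 < c) (hc2 : c ^ 2 = 1 + k ^ 2) (x : ℝ) :
    HasDerivAt (fun y => Real.sin y * Real.arctan (k * Real.cos y)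
      + (c / k) * (y + Real.arctan ((1 - c) * (Real.sin y * Real.cos y)
          / (c * Real.cos y ^ 2 + Real.sin y ^ 2)))
      - y / k)
      (Real.cos x * Real.arctan (k * Real.cos x)) x := by
  have hv : 0 < c * cos x ^ 2 + sin x ^ 2 := by
    rcases le_or_gt c 1 with h | h
    · nlinarith [sin_sq_add_cos_sq x, sq_nonneg (sin x)]
    · nlinarith [sin_sq_add_cos_sq x, sq_nonneg (cos x)]
  have hD : (0:ℝ) < 1 + (k * cos x) ^ 2 := by positivity
  have h2 : HasDerivAt (fun y => arctan (k * cos y))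
      (1 / (1 + (k * cos x) ^ 2) * (k * -sin x)) x :=
    ((Real.hasDerivAt_cos x).const_mul k).arctan
  have h1 : HasDerivAt (fun y => sin y * arctan (k * cos y))
      (cos x * arctan (k * cos x) + sin x * (1 / (1 + (k * cos x) ^ 2) * (k * -sin x))) x :=
    (Real.hasDerivAt_sin x).mul h2
  have hu : HasDerivAt (fun y => (1 - c) * (sin y * cos y))
      ((1 - c) * (cos x * cos x + sin x * -sin x)) x :=
    ((Real.hasDerivAt_sin x).mul (Real.hasDerivAt_cos x)).const_mul (1 - c)
  have hvd : HasDerivAt (fun y => c * cos y ^ 2 + sin y ^ 2)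
      (c * (2 * cos x ^ 1 * -sin x) + 2 * sin x ^ 1 * cos x) x :=
    (((Real.hasDerivAt_cos x).pow 2).const_mul c).add ((Real.hasDerivAt_sin x).pow 2)
  have hw : HasDerivAt (fun y => (1 - c) * (sin y * cos y) / (c * cos y ^ 2 + sin y ^ 2))
      (((1 - c) * (cos x * cos x + sin x * -sin x) * (c * cos x ^ 2 + sin x ^ 2)
        - (1 - c) * (sin x * cos x) * (c * (2 * cos x ^ 1 * -sin x) + 2 * sin x ^ 1 * cos x))
        / (c * cos x ^ 2 + sin x ^ 2) ^ 2) x :=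
    hu.div hvd hv.ne'
  have harc : HasDerivAt (fun y => arctan ((1 - c) * (sin y * cos y)
        / (c * cos y ^ 2 + sin y ^ 2)))
      (1 / (1 + ((1 - c) * (sin x * cos x) / (c * cos x ^ 2 + sin x ^ 2)) ^ 2)
        * (((1 - c) * (cos x * cos x + sin x * -sin x) * (c * cos x ^ 2 + sin x ^ 2)
        - (1 - c) * (sin x * cos x) * (c * (2 * cos x ^ 1 * -sin x) + 2 * sin x ^ 1 * cos x))
        / (c * cos x ^ 2 + sin x ^ 2) ^ 2)) x :=
    (Real.hasDerivAt_arctan _).comp x hw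
  have hN : ((1 - c) * (cos x * cos x + sin x * -sin x) * (c * cos x ^ 2 + sin x ^ 2)
        - (1 - c) * (sin x * cos x) * (c * (2 * cos x ^ 1 * -sin x) + 2 * sin x ^ 1 * cos x))
      = (1 - c) * (c * cos x ^ 2 - sin x ^ 2) := by
    have hs := sin_sq_add_cos_sq x
    linear_combination ((1 - c) * (c * cos x ^ 2 - sin x ^ 2)) * hs
  have hden : (1:ℝ) + ((1 - c) * (sin x * cos x) / (c * cos x ^ 2 + sin x ^ 2)) ^ 2
      = (1 + (k * cos x) ^ 2) / (c * cos x ^ 2 + sin x ^ 2) ^ 2 := by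
    have hs := sin_sq_add_cos_sq x
    field_simp
    linear_combination (cos x ^ 2 * (cos x ^ 2 + sin x ^ 2)) * hc2
      + (sin x ^ 2 + cos x ^ 2 + 1 + k ^ 2 * cos x ^ 2) * hs
  have E_arc : 1 / (1 + ((1 - c) * (sin x * cos x) / (c * cos x ^ 2 + sin x ^ 2)) ^ 2)
        * (((1 - c) * (cos x * cos x + sin x * -sin x) * (c * cos x ^ 2 + sin x ^ 2)
        - (1 - c) * (sin x * cos x) * (c * (2 * cos x ^ 1 * -sin x) + 2 * sin x ^ 1 * cos x))
        / (c * cos x ^ 2 + sin x ^ 2) ^ 2)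
      = (1 - c) * (c * cos x ^ 2 - sin x ^ 2) / (1 + (k * cos x) ^ 2) := by
    rw [hden, hN, one_div_div, div_mul_div_comm,
      mul_comm ((c * cos x ^ 2 + sin x ^ 2) ^ 2)]
    rw [mul_div_mul_right _ _ (pow_ne_zero 2 hv.ne')]
  rw [E_arc] at harc
  have hrem : sin x * (1 / (1 + (k * cos x) ^ 2) * (k * -sin x))
      + c / k * (1 + (1 - c) * (c * cos x ^ 2 - sin x ^ 2) / (1 + (k * cos x) ^ 2))
      - 1 / k = 0 := by
    have hs := sin_sq_add_cos_sq x
    have hDeq : 1 + (k * cos x) ^ 2 = sin x ^ 2 + c ^ 2 * cos x ^ 2 := by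
      linear_combination (-1 : ℝ) * hs + (-cos x ^ 2) * hc2
    rw [hDeq]
    have hD2 : sin x ^ 2 + c ^ 2 * cos x ^ 2 ≠ 0 := by rw [← hDeq]; positivity
    field_simp
    linear_combination sin x ^ 2 * hc2
  have hG := (h1.add (((hasDerivAt_id x).add harc).const_mul (c / k))).sub
    ((hasDerivAt_id x).div_const k)
  refine hG.congr_deriv ?_
  linear_combination hrem

theorem expectation_abs_cos_arctan (lam0 : ℝ) (h0 : 0 < lam0) (h1 : lam0 < 1 / 2) :
    (1 / π) * ∫ ν in (0 : ℝ)..π,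
        |Real.cos ν| * Real.arctan (4 * lam0 * |Real.cos ν| / (4 * lam0 ^ 2 - 1))
      = -2 * lam0 := by
  have hden : 4 * lam0 ^ 2 - 1 < 0 := by nlinarith
  have hpos : 0 < 1 - 4 * lam0 ^ 2 := by nlinarith
  set k : ℝ := 4 * lam0 / (4 * lam0 ^ 2 - 1) with hkdef
  set c : ℝ := (1 + 4 * lam0 ^ 2) / (1 - 4 * lam0 ^ 2) with hcdef
  have hk : k ≠ 0 := div_ne_zero (by positivity) hden.ne
  have hc : 0 < c := div_pos (by positivity) hpos
  have hc2 : c ^ 2 = 1 + k ^ 2 := by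
    rw [hkdef, hcdef]
    field_simp [hpos.ne', hden.ne]
    ring
  -- rewrite integrand
  have hre : ∀ ν : ℝ, |Real.cos ν| * Real.arctan (4 * lam0 * |Real.cos ν| / (4 * lam0 ^ 2 - 1))
      = |Real.cos ν| * Real.arctan (k * |Real.cos ν|) := by
    intro ν
    congr 2
    rw [hkdef]; ring
  have hcont : Continuous fun ν : ℝ => |Real.cos ν| * Real.arctan (k * |Real.cos ν|) :=
    (Real.continuous_cos.abs).mul
      (Real.continuous_arctan.comp (continuous_const.mul Real.continuous_cos.abs))
  have hint : ∀ a b : ℝ, IntervalIntegrable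
      (fun ν : ℝ => |Real.cos ν| * Real.arctan (k * |Real.cos ν|)) MeasureTheory.volume a b :=
    fun a b => hcont.intervalIntegrable a b
  have hsplit : (∫ ν in (0:ℝ)..π, |Real.cos ν| * Real.arctan (k * |Real.cos ν|))
      = (∫ ν in (0:ℝ)..(π/2), |Real.cos ν| * Real.arctan (k * |Real.cos ν|))
      + (∫ ν in (π/2:ℝ)..π, |Real.cos ν| * Real.arctan (k * |Real.cos ν|)) :=
    (intervalIntegral.integral_add_adjacent_intervals (hint 0 (π/2)) (hint (π/2) π)).symm
  have hsym : (∫ ν in (π/2:ℝ)..π, |Real.cos ν| * Real.arctan (k * |Real.cos ν|))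
      = (∫ ν in (0:ℝ)..(π/2), |Real.cos ν| * Real.arctan (k * |Real.cos ν|)) := by
    have := intervalIntegral.integral_comp_sub_left (a := (0:ℝ)) (b := π/2)
      (fun ν : ℝ => |Real.cos ν| * Real.arctan (k * |Real.cos ν|)) π
    simp only [Real.cos_pi_sub, abs_neg] at this
    rw [show π - π / 2 = π / 2 by ring, sub_zero] at this
    exact this.symm
  have habs : (∫ ν in (0:ℝ)..(π/2), |Real.cos ν| * Real.arctan (k * |Real.cos ν|))
      = (∫ ν in (0:ℝ)..(π/2), Real.cos ν * Real.arctan (k * Real.cos ν)) := by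
    apply intervalIntegral.integral_congr
    intro ν hν
    rw [Set.uIcc_of_le (by positivity)] at hν
    simp only
    rw [abs_of_nonneg (Real.cos_nonneg_of_mem_Icc ⟨by linarith [hν.1, Real.pi_pos], hν.2⟩)]
  have hftc := intervalIntegral.integral_eq_sub_of_hasDerivAt (a := 0) (b := π/2)
    (fun x _ => hasDerivAt_G k c hk hc hc2 x)
    ((Real.continuous_cos.mul
      (Real.continuous_arctan.comp (continuous_const.mul Real.continuous_cos))).intervalIntegrable _ _)
  have hval : (∫ ν in (0:ℝ)..(π/2), Real.cos ν * Real.arctan (k * Real.cos ν))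
      = (c - 1) / k * (π / 2) := by
    rw [hftc]
    simp only [Real.cos_pi_div_two, Real.sin_pi_div_two, Real.sin_zero, Real.cos_zero,
      mul_zero, zero_mul, mul_one, Real.arctan_zero, add_zero, zero_add, one_mul, zero_div,
      sub_zero, mul_zero]
    ring
  rw [intervalIntegral.integral_congr (fun ν _ => hre ν), hsplit, hsym, habs, hval]
  have hπ : (π : ℝ) ≠ 0 := Real.pi_ne_zero
  rw [hkdef, hcdef]
  field_simp
  ring
end

section
/- Let λ₀ be a real number with 0 < λ₀ < 1/2. Then (1/π) ∫₀^π sin(ν) · arctan(4λ₀·sin(ν)/(4λ₀² − 1)) dν = −2λ₀. -/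
open Real

set_option maxHeartbeats 1000000

theorem expectation_sin_arctan (lam0 : ℝ) (h0 : 0 < lam0) (h1 : lam0 < 1 / 2) :
    (1 / π) * ∫ ν in (0 : ℝ)..π,
        Real.sin ν * Real.arctan (4 * lam0 * Real.sin ν / (4 * lam0 ^ 2 - 1))
      = -2 * lam0 := by
  have hπ : (0:ℝ) < π := Real.pi_pos
  obtain ⟨c, hc⟩ : ∃ c : ℝ, c = 4 * lam0 / (4 * lam0 ^ 2 - 1) := ⟨_, rfl⟩
  obtain ⟨k, hk⟩ : ∃ k : ℝ, k = (1 + 4 * lam0 ^ 2) / (1 - 4 * lam0 ^ 2) := ⟨_, rfl⟩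
  have hd2 : (0:ℝ) < 1 - 4 * lam0 ^ 2 := by nlinarith
  have hd' : 4 * lam0 ^ 2 - 1 ≠ 0 := by nlinarith
  have hcne : c ≠ 0 := by rw [hc]; exact div_ne_zero (by positivity) hd'
  have hk1 : 1 < k := by
    rw [hk, lt_div_iff₀ hd2]; nlinarith
  have hk0 : 0 < k - 1 := by linarith
  have hc2 : c ^ 2 = k ^ 2 - 1 := by
    rw [hc, hk]; field_simp; ring
  have hrw : ∀ ν : ℝ, 4 * lam0 * Real.sin ν / (4 * lam0 ^ 2 - 1) = c * Real.sin ν := by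
    intro ν; rw [hc]; ring
  simp_rw [hrw]
  have hderiv : ∀ x ∈ Set.uIcc (0:ℝ) π,
      HasDerivAt (fun x => -Real.cos x * Real.arctan (c * Real.sin x)
        + (1 / c) * ((k - 1) * x
          + k * Real.arctan ((k - 1) * Real.sin x * Real.cos x / (1 + (k - 1) * Real.sin x ^ 2))))
        (Real.sin x * Real.arctan (c * Real.sin x)) x := by
    intro x _
    have hs := Real.hasDerivAt_sin x
    have hco := Real.hasDerivAt_cos x
    have hpy := Real.sin_sq_add_cos_sq x
    have hD : (0:ℝ) < 1 + (k - 1) * Real.sin x ^ 2 := by positivity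
    have hcs : (0:ℝ) < 1 + c ^ 2 * Real.sin x ^ 2 := by positivity
    have hDne : ((1 + (k - 1) * Real.sin x ^ 2) ^ 2) ≠ 0 := by positivity
    have hBne : (1 + (k ^ 2 - 1) * Real.sin x ^ 2) ≠ 0 := by nlinarith [sq_nonneg (Real.sin x)]
    have hN : HasDerivAt (fun y => (k - 1) * Real.sin y * Real.cos y)
        ((k - 1) * (1 - 2 * Real.sin x ^ 2)) x := by
      have h := ((hs.const_mul (k - 1)).mul hco)
      refine h.congr_deriv ?_
      linear_combination (k-1) * hpy
    have hDD : HasDerivAt (fun y => 1 + (k - 1) * Real.sin y ^ 2)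
        (2 * (k - 1) * Real.sin x * Real.cos x) x := by
      have h := (((hs.pow 2)).const_mul (k - 1)).const_add 1
      refine h.congr_deriv ?_
      ring
    have hu : HasDerivAt
        (fun y => (k - 1) * Real.sin y * Real.cos y / (1 + (k - 1) * Real.sin y ^ 2))
        ((k - 1) * (1 - (k + 1) * Real.sin x ^ 2) / (1 + (k - 1) * Real.sin x ^ 2) ^ 2) x := by
      have h := hN.div hDD hD.ne'
      refine h.congr_deriv ?_
      rw [div_eq_div_iff (by positivity) (by positivity)]
      ring_nf
      linear_combination (-(2*(k-1)^2*Real.sin x^2*(1 + (k - 1) * Real.sin x ^ 2)^2)) * hpy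
    have h1u : 1 + ((k - 1) * Real.sin x * Real.cos x / (1 + (k - 1) * Real.sin x ^ 2)) ^ 2
        = (1 + c ^ 2 * Real.sin x ^ 2) / (1 + (k - 1) * Real.sin x ^ 2) ^ 2 := by
      rw [div_pow, hc2, eq_div_iff hDne, add_mul, one_mul, div_mul_cancel₀ _ hDne]
      linear_combination ((k-1)^2*Real.sin x^2) * hpy
    have hphi : HasDerivAt
        (fun y => Real.arctan ((k - 1) * Real.sin y * Real.cos y / (1 + (k - 1) * Real.sin y ^ 2)))
        (k / (1 + c ^ 2 * Real.sin x ^ 2) - 1) x := by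
      have h := hu.arctan
      convert h using 1
      rw [h1u, hc2]
      field_simp
      ring
    have h2 : HasDerivAt (fun y => Real.arctan (c * Real.sin y))
        (1 / (1 + (c * Real.sin x) ^ 2) * (c * Real.cos x)) x := (hs.const_mul c).arctan
    have h3 : HasDerivAt (fun y => -Real.cos y * Real.arctan (c * Real.sin y))
        (Real.sin x * Real.arctan (c * Real.sin x)
          + (-Real.cos x) * (1 / (1 + (c * Real.sin x) ^ 2) * (c * Real.cos x))) x := by
      have h := hco.neg.mul h2
      refine h.congr_deriv ?_
      simp only [Pi.neg_apply]
      ring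
    have h4 := h3.add ((((hasDerivAt_id x).const_mul (k - 1)).add
      (hphi.const_mul k)).const_mul (1 / c))
    refine h4.congr_deriv ?_
    have h5 : (1 + (c * Real.sin x) ^ 2) = 1 + c ^ 2 * Real.sin x ^ 2 := by ring
    rw [h5]
    have hexp : (-Real.cos x) * (1 / (1 + c ^ 2 * Real.sin x ^ 2) * (c * Real.cos x))
        + (1 / c) * ((k - 1) * 1 + k * (k / (1 + c ^ 2 * Real.sin x ^ 2) - 1)) = 0 := by
      field_simp
      linear_combination (-(c^2)) * hpy + (-1) * hc2
    linarith [hexp]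
  have hint : IntervalIntegrable (fun ν => Real.sin ν * Real.arctan (c * Real.sin ν))
      MeasureTheory.volume 0 π :=
    (Real.continuous_sin.mul (Real.continuous_arctan.comp
      (continuous_const.mul Real.continuous_sin))).intervalIntegrable 0 π
  rw [intervalIntegral.integral_eq_sub_of_hasDerivAt hderiv hint]
  simp only [Real.sin_pi, Real.cos_pi, Real.sin_zero, Real.cos_zero, mul_zero, zero_mul,
    Real.arctan_zero, mul_zero, add_zero, zero_div, zero_mul, mul_one, neg_mul, one_mul,
    zero_add, neg_zero, sub_zero]
  rw [hc, hk]
  field_simp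
  ring
end

section
/- Let λ₀ be a real number with 0 < λ₀ < 1/2. Then (1/π) ∫₀^π sin(ν)·cos²(ν) · arctan(4λ₀·sin(ν)/(4λ₀² − 1)) dν = −λ₀/2 − (2/3)·λ₀³. -/
set_option maxHeartbeats 1000000

open Real

theorem expectation_sin_cos_sq_arctan (lam0 : ℝ) (h0 : 0 < lam0) (h1 : lam0 < 1 / 2) :
    (1 / π) * ∫ ν in (0 : ℝ)..π,
        Real.sin ν * Real.cos ν ^ 2 *
          Real.arctan (4 * lam0 * Real.sin ν / (4 * lam0 ^ 2 - 1))
      = -lam0 / 2 - (2 / 3) * lam0 ^ 3 := by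
  set L := lam0 with hLdef
  have hL4 : 4 * L ^ 2 < 1 := by nlinarith
  have hd : 4 * L ^ 2 - 1 ≠ 0 := by nlinarith
  have hLne : L ≠ 0 := ne_of_gt h0
  set H : ℝ → ℝ := fun ν =>
    -(Real.cos ν ^ 3 / 3) * Real.arctan (4 * L * Real.sin ν / (4 * L ^ 2 - 1))
    + ((1 - 4 * L ^ 2) / (24 * L)) * (ν + Real.sin ν * Real.cos ν)
    + ((1 + 4 * L ^ 2) ^ 2 * (1 - 4 * L ^ 2) / (192 * L ^ 3)) * ν
    - ((1 + 4 * L ^ 2) ^ 3 / (192 * L ^ 3)) *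
        (ν + Real.arctan (4 * L ^ 2 * Real.sin (2 * ν) / (1 - 4 * L ^ 2 * Real.cos (2 * ν))))
    with hHdef
  have key : ∀ ν : ℝ, HasDerivAt H
      (Real.sin ν * Real.cos ν ^ 2 *
        Real.arctan (4 * L * Real.sin ν / (4 * L ^ 2 - 1))) ν := by
    intro ν
    have hm : 1 - 4 * L ^ 2 * Real.cos (2 * ν) ≠ 0 := by
      nlinarith [Real.neg_one_le_cos (2*ν), Real.cos_le_one (2*ν), sq_nonneg L]
    have hg : HasDerivAt (fun ν => 4 * L * Real.sin ν / (4 * L ^ 2 - 1))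
        (4 * L * Real.cos ν / (4 * L ^ 2 - 1)) ν :=
      ((Real.hasDerivAt_sin ν).const_mul (4 * L)).div_const _
    have ha1 := hg.arctan
    have hc3 : HasDerivAt (fun ν => -(Real.cos ν ^ 3 / 3)) (Real.sin ν * Real.cos ν ^ 2) ν := by
      have := (((Real.hasDerivAt_cos ν).pow 3).div_const 3).neg
      refine this.congr_deriv ?_
      ring
    have hp1 := hc3.mul ha1
    have hp2 : HasDerivAt (fun ν : ℝ => ((1 - 4 * L ^ 2) / (24 * L)) * (ν + Real.sin ν * Real.cos ν))
        (((1 - 4 * L ^ 2) / (24 * L)) * (1 + (Real.cos ν * Real.cos ν + Real.sin ν * -Real.sin ν))) ν :=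
      ((hasDerivAt_id ν).add ((Real.hasDerivAt_sin ν).mul (Real.hasDerivAt_cos ν))).const_mul _
    have hp3 : HasDerivAt (fun ν : ℝ => ((1 + 4 * L ^ 2) ^ 2 * (1 - 4 * L ^ 2) / (192 * L ^ 3)) * ν)
        ((1 + 4 * L ^ 2) ^ 2 * (1 - 4 * L ^ 2) / (192 * L ^ 3)) ν := by
      simpa using (hasDerivAt_id ν).const_mul ((1 + 4 * L ^ 2) ^ 2 * (1 - 4 * L ^ 2) / (192 * L ^ 3))
    have htwo : HasDerivAt (fun ν : ℝ => 2 * ν) 2 ν := by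
      simpa using (hasDerivAt_id ν).const_mul 2
    have hnum : HasDerivAt (fun ν : ℝ => 4 * L ^ 2 * Real.sin (2 * ν))
        (4 * L ^ 2 * (Real.cos (2 * ν) * 2)) ν :=
      ((Real.hasDerivAt_sin (2 * ν)).comp ν htwo).const_mul _
    have hden : HasDerivAt (fun ν : ℝ => 1 - 4 * L ^ 2 * Real.cos (2 * ν))
        (-(4 * L ^ 2 * (-Real.sin (2 * ν) * 2))) ν :=
      (((Real.hasDerivAt_cos (2 * ν)).comp ν htwo).const_mul (4 * L ^ 2)).const_sub 1
    have hu := hnum.div hden hm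
    have ha2 := hu.arctan
    have hp4 := (((hasDerivAt_id ν).add ha2).const_mul ((1 + 4 * L ^ 2) ^ 3 / (192 * L ^ 3)))
    have hH := ((hp1.add hp2).add hp3).sub hp4
    refine hH.congr_deriv ?_
    symm
    simp only [Pi.div_apply]
    have hs : Real.sin ν ^ 2 = 1 - Real.cos ν ^ 2 := Real.sin_sq ν
    rw [Real.sin_two_mul, Real.cos_two_mul]
    rw [Real.cos_two_mul] at hm
    set s := Real.sin ν
    set c := Real.cos ν
    set a := Real.arctan (4 * L * s / (4 * L ^ 2 - 1))
    clear_value s c a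
    clear hg ha1 hc3 hp1 hp2 hp3 hp4 htwo hnum hden hu ha2 hH hHdef
    have hq1 : (4 * L ^ 2 - 1) ^ 2 + (4 * L * s) ^ 2 ≠ 0 := by positivity
    have hq2 : (1 - 4 * L ^ 2 * (2 * c ^ 2 - 1)) ^ 2 + (4 * L ^ 2 * (2 * s * c)) ^ 2 ≠ 0 := by positivity
    have hm' : 1 - 4 * L ^ 2 * (c ^ 2 * 2 - 1) ≠ 0 := by rw [mul_comm (c ^ 2) 2]; exact hm
    have hq3 : (1 - 4 * L ^ 2 * (c ^ 2 * 2 - 1)) ^ 2 + s ^ 2 * c ^ 2 * 4 ^ 2 * L ^ 4 * 2 ^ 2 ≠ 0 := by positivity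
    field_simp
    have e3 : s^3 = s*(1-c^2) := by linear_combination s*hs
    have e4 : s^4 = (1-c^2)^2 := by linear_combination (s^2+1-c^2)*hs
    have e5 : s^5 = s*(1-c^2)^2 := by linear_combination (s^3+s*(1-c^2))*hs
    have e6 : s^6 = (1-c^2)^3 := by linear_combination (s^4+s^2*(1-c^2)+(1-c^2)^2)*hs
    have e7 : s^7 = s*(1-c^2)^3 := by linear_combination (s^5+s^3*(1-c^2)+s*(1-c^2)^2)*hs
    ring_nf
    simp only [e7, e6, e5, e4, e3, hs]
    ring
  have hcont : Continuous (fun ν : ℝ => Real.sin ν * Real.cos ν ^ 2 *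
      Real.arctan (4 * L * Real.sin ν / (4 * L ^ 2 - 1))) := by
    apply (Real.continuous_sin.mul (Real.continuous_cos.pow 2)).mul
    exact Real.continuous_arctan.comp ((continuous_const.mul Real.continuous_sin).div_const _)
  have hint : IntervalIntegrable (fun ν : ℝ => Real.sin ν * Real.cos ν ^ 2 *
      Real.arctan (4 * L * Real.sin ν / (4 * L ^ 2 - 1))) MeasureTheory.volume 0 π :=
    hcont.intervalIntegrable 0 π
  rw [intervalIntegral.integral_eq_sub_of_hasDerivAt (fun ν _ => key ν) hint]
  rw [hHdef]
  simp only [Real.sin_pi, Real.cos_pi, Real.sin_zero, Real.cos_zero, mul_zero, zero_mul,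
    zero_div, Real.arctan_zero, mul_one, Real.sin_two_pi, Real.cos_two_pi,
    mul_zero, add_zero, zero_add, neg_zero, sub_zero]
  have hpi := Real.pi_ne_zero
  field_simp
  ring
end

section
/- Let λ₀, n₁, n₂ be real numbers with 0 < λ₀ < 1/2, n₁ > 0, |n₂| < 1, and n₁² + n₂² = 1. Then arctan(1/(2λ₀n₁) + n₂/n₁) + arctan(1/(2λ₀n₁) − n₂/n₁) = π + arctan(4λ₀n₁/(4λ₀² − 1)). -/
open Real

theorem arctan_sum_identity (lam0 n1 n2 : ℝ)
    (h0 : 0 < lam0) (h1 : lam0 < 1 / 2) (hn1 : 0 < n1) (hn2 : |n2| < 1)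
    (hnorm : n1 ^ 2 + n2 ^ 2 = 1) :
    Real.arctan (1 / (2 * lam0 * n1) + n2 / n1)
        + Real.arctan (1 / (2 * lam0 * n1) - n2 / n1)
      = π + Real.arctan (4 * lam0 * n1 / (4 * lam0 ^ 2 - 1)) := by
  set A := 1 / (2 * lam0 * n1) + n2 / n1 with hA
  set B := 1 / (2 * lam0 * n1) - n2 / n1 with hB
  have hn2' : n2 ^ 2 < 1 := by nlinarith [abs_nonneg n2, sq_abs n2]
  have hx : 0 < A := by
    have h2 : 1 + 2 * lam0 * n2 > 0 := by
      nlinarith [abs_nonneg n2, neg_abs_le n2, sq_abs n2]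
    have : A = (1 + 2 * lam0 * n2) / (2 * lam0 * n1) := by
      rw [hA]; field_simp
    rw [this]; positivity
  have key : A * B = 1 + (1 - 4 * lam0 ^ 2) / (4 * lam0 ^ 2 * n1 ^ 2) := by
    rw [hA, hB]; field_simp
    linear_combination (-(16 * lam0 ^ 2)) * hnorm
  have hsum : A + B = 1 / (lam0 * n1) := by
    rw [hA, hB]; field_simp; ring
  have hxy : 1 < A * B := by
    rw [key]
    have : 0 < (1 - 4 * lam0 ^ 2) / (4 * lam0 ^ 2 * n1 ^ 2) :=
      div_pos (by nlinarith) (by positivity)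
    linarith
  have h4 : 4 * lam0 ^ 2 - 1 ≠ 0 := by nlinarith
  have hden : 1 - A * B ≠ 0 := by linarith
  have harg : (A + B) / (1 - A * B) = 4 * lam0 * n1 / (4 * lam0 ^ 2 - 1) := by
    rw [hsum, key]
    rw [div_eq_div_iff (by rw [← key]; exact hden) h4]
    field_simp
    ring
  rw [arctan_add_eq_add_pi hxy hx, harg, add_comm]
end

section
/- Let λ₀, n₁, n₂ be real numbers with λ₀ > 0, n₁ > 0, 0 ≤ n₂ < 1, and n₁² + n₂² = 1. Then (n₁²/π²) ∫₀^{1/2} (1 + π²λ²/3)/(λ² + 2λ₀n₂λ + λ₀²) dλ = n₁²/6 + n₁·(1/(λ₀π²) + (λ₀/3)·(2n₂² − 1))·(arctan(1/(2λ₀n₁) + n₂/n₁) − arctan(n₂/n₁)) − (λ₀n₁²n₂/3)·log(1 + n₂/λ₀ + 1/(4λ₀²)). -/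
open Real

theorem integral_G_plus (lam0 n1 n2 : ℝ)
    (h0 : 0 < lam0) (hn1 : 0 < n1) (hn2 : 0 ≤ n2) (hn2' : n2 < 1)
    (hnorm : n1 ^ 2 + n2 ^ 2 = 1) :
    (n1 ^ 2 / π ^ 2) *
        ∫ lam in (0 : ℝ)..(1 / 2),
          (1 + π ^ 2 * lam ^ 2 / 3) / (lam ^ 2 + 2 * lam0 * n2 * lam + lam0 ^ 2)
      = n1 ^ 2 / 6
        + n1 * (1 / (lam0 * π ^ 2) + (lam0 / 3) * (2 * n2 ^ 2 - 1)) *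
            (Real.arctan (1 / (2 * lam0 * n1) + n2 / n1) - Real.arctan (n2 / n1))
        - (lam0 * n1 ^ 2 * n2 / 3) *
            Real.log (1 + n2 / lam0 + 1 / (4 * lam0 ^ 2)) := by
  have h0' : lam0 ≠ 0 := h0.ne'
  have hn1' : n1 ≠ 0 := hn1.ne'
  have hpi : (π : ℝ) ≠ 0 := Real.pi_ne_zero
  set b := lam0 * n2 with hb
  set a := lam0 * n1 with ha
  have ha0 : 0 < a := mul_pos h0 hn1
  have hane : a ≠ 0 := ne_of_gt ha0
  have hc : lam0 ^ 2 = b ^ 2 + a ^ 2 := by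
    rw [hb, ha]; nlinarith [hnorm]
  have hgpos : ∀ x : ℝ, 0 < x ^ 2 + 2 * lam0 * n2 * x + lam0 ^ 2 := by
    intro x
    have : x ^ 2 + 2 * lam0 * n2 * x + lam0 ^ 2 = (x + b) ^ 2 + a ^ 2 := by
      rw [hc]; ring
    rw [this]; positivity
  set A : ℝ := -(π ^ 2 * b / 3) with hA
  set B : ℝ := 1 - π ^ 2 * lam0 ^ 2 / 3 + 2 * π ^ 2 * b ^ 2 / 3 with hB
  set F : ℝ → ℝ := fun x =>
    π ^ 2 / 3 * x + A * Real.log (x ^ 2 + 2 * lam0 * n2 * x + lam0 ^ 2)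
      + (B / a) * Real.arctan ((x + b) / a) with hF
  have hderiv : ∀ x : ℝ,
      HasDerivAt F ((1 + π ^ 2 * x ^ 2 / 3) / (x ^ 2 + 2 * lam0 * n2 * x + lam0 ^ 2)) x := by
    intro x
    have hg : HasDerivAt (fun y : ℝ => y ^ 2 + 2 * lam0 * n2 * y + lam0 ^ 2)
        (2 * x + 2 * lam0 * n2) x := by
      have h1 : HasDerivAt (fun y : ℝ => y ^ 2) (2 * x) x := by
        simpa using (hasDerivAt_pow 2 x)
      have h2 : HasDerivAt (fun y : ℝ => 2 * lam0 * n2 * y) (2 * lam0 * n2) x := by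
        simpa using (hasDerivAt_id x).const_mul (2 * lam0 * n2)
      simpa using (h1.add h2).add_const (lam0 ^ 2)
    have hgx : (0 : ℝ) < x ^ 2 + 2 * lam0 * n2 * x + lam0 ^ 2 := hgpos x
    have hlog : HasDerivAt (fun y : ℝ => Real.log (y ^ 2 + 2 * lam0 * n2 * y + lam0 ^ 2))
        ((2 * x + 2 * lam0 * n2) / (x ^ 2 + 2 * lam0 * n2 * x + lam0 ^ 2)) x := by
      simpa [div_eq_mul_inv, mul_comm] using hg.log (ne_of_gt hgx)
    have hatan : HasDerivAt (fun y : ℝ => Real.arctan ((y + b) / a))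
        (1 / (1 + ((x + b) / a) ^ 2) * (1 / a)) x := by
      have hin : HasDerivAt (fun y : ℝ => (y + b) / a) (1 / a) x := by
        simpa using ((hasDerivAt_id x).add_const b).div_const a
      exact (Real.hasDerivAt_arctan ((x + b) / a)).comp x hin
    have h1 : HasDerivAt (fun y : ℝ => π ^ 2 / 3 * y) (π ^ 2 / 3) x := by
      simpa using (hasDerivAt_id x).const_mul (π ^ 2 / 3)
    have := (h1.add (hlog.const_mul A)).add (hatan.const_mul (B / a))
    convert this using 1
    · rfl
    · rfl
    · rfl
    have h2 : 1 + ((x + b) / a) ^ 2 = ((x + b) ^ 2 + a ^ 2) / a ^ 2 := by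
      field_simp; ring
    have h3 : (x + b) ^ 2 + a ^ 2 = x ^ 2 + 2 * lam0 * n2 * x + lam0 ^ 2 := by
      rw [hc]; ring
    rw [h2, h3]
    rw [hA, hB]
    field_simp
    have hD : x * lam0 * n2 * 2 + x ^ 2 + lam0 ^ 2 ≠ 0 := ne_of_gt (by linarith [hgx])
    rw [hb]; linear_combination π ^ 2 * mul_inv_cancel₀ hD
  have hcont : Continuous (fun x : ℝ =>
      (1 + π ^ 2 * x ^ 2 / 3) / (x ^ 2 + 2 * lam0 * n2 * x + lam0 ^ 2)) := by
    apply Continuous.div (by continuity) (by continuity)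
    intro x; exact ne_of_gt (hgpos x)
  have hint :
      (∫ lam in (0 : ℝ)..(1 / 2),
        (1 + π ^ 2 * lam ^ 2 / 3) / (lam ^ 2 + 2 * lam0 * n2 * lam + lam0 ^ 2))
      = F (1 / 2) - F 0 := by
    exact intervalIntegral.integral_eq_sub_of_hasDerivAt
      (fun x _ => hderiv x) (hcont.intervalIntegrable 0 (1 / 2))
  rw [hint]
  have hlogdiff : Real.log ((1 / 2 : ℝ) ^ 2 + 2 * lam0 * n2 * (1 / 2) + lam0 ^ 2)
      - Real.log ((0 : ℝ) ^ 2 + 2 * lam0 * n2 * 0 + lam0 ^ 2)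
      = Real.log (1 + n2 / lam0 + 1 / (4 * lam0 ^ 2)) := by
    have hg0 : (0 : ℝ) ^ 2 + 2 * lam0 * n2 * 0 + lam0 ^ 2 = lam0 ^ 2 := by ring
    rw [hg0, ← Real.log_div (ne_of_gt (hgpos (1 / 2))) (by positivity)]
    congr 1
    field_simp
    ring
  have harg1 : ((1 / 2 : ℝ) + b) / a = 1 / (2 * lam0 * n1) + n2 / n1 := by
    rw [hb, ha]; field_simp
  have harg0 : ((0 : ℝ) + b) / a = n2 / n1 := by
    rw [hb, ha]; field_simp; ring
  rw [hF]
  simp only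
  rw [harg1, harg0]
  have h6 : n1 ^ 2 / π ^ 2 * (π ^ 2 / 6) = n1 ^ 2 / 6 := by
    field_simp
  have hcoefA : n1 ^ 2 / π ^ 2 * A = -(lam0 * n1 ^ 2 * n2 / 3) := by
    rw [hA, hb]; field_simp
  have hcoefB : n1 ^ 2 / π ^ 2 * (B / a)
      = n1 * (1 / (lam0 * π ^ 2) + lam0 / 3 * (2 * n2 ^ 2 - 1)) := by
    rw [hB, hb, ha]; field_simp; ring
  set L1 := Real.log ((1 / 2 : ℝ) ^ 2 + 2 * lam0 * n2 * (1 / 2) + lam0 ^ 2) with hL1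
  set L0 := Real.log ((0 : ℝ) ^ 2 + 2 * lam0 * n2 * 0 + lam0 ^ 2) with hL0
  set T1 := Real.arctan (1 / (2 * lam0 * n1) + n2 / n1) with hT1
  set T0 := Real.arctan (n2 / n1) with hT0
  linear_combination h6 + (L1 - L0) * hcoefA + (T1 - T0) * hcoefB
    - (lam0 * n1 ^ 2 * n2 / 3) * hlogdiff
end

section
/- Let λ₀, n₁, n₂ be real numbers with λ₀ > 0, n₁ > 0, 0 ≤ n₂ < 1, and n₁² + n₂² = 1. Then (n₁²/π²) ∫₀^{1/2} (1 + π²λ²/3)/(λ² − 2λ₀n₂λ + λ₀²) dλ = n₁²/6 + n₁·(1/(λ₀π²) + (λ₀/3)·(2n₂² − 1))·(arctan(1/(2λ₀n₁) − n₂/n₁) + arctan(n₂/n₁)) + (λ₀n₁²n₂/3)·log(1 − n₂/λ₀ + 1/(4λ₀²)). -/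
open Real

theorem integral_G_minus (lam0 n1 n2 : ℝ)
    (h0 : 0 < lam0) (hn1 : 0 < n1) (hn2 : 0 ≤ n2) (hn2' : n2 < 1)
    (hnorm : n1 ^ 2 + n2 ^ 2 = 1) :
    (n1 ^ 2 / π ^ 2) *
        ∫ lam in (0 : ℝ)..(1 / 2),
          (1 + π ^ 2 * lam ^ 2 / 3) / (lam ^ 2 - 2 * lam0 * n2 * lam + lam0 ^ 2)
      = n1 ^ 2 / 6
        + n1 * (1 / (lam0 * π ^ 2) + (lam0 / 3) * (2 * n2 ^ 2 - 1)) *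
            (Real.arctan (1 / (2 * lam0 * n1) - n2 / n1) + Real.arctan (n2 / n1))
        + (lam0 * n1 ^ 2 * n2 / 3) *
            Real.log (1 - n2 / lam0 + 1 / (4 * lam0 ^ 2)) := by
  have hpi : (0:ℝ) < π := Real.pi_pos
  have hpi2 : π ≠ 0 := Real.pi_ne_zero
  have h0' : lam0 ≠ 0 := ne_of_gt h0
  have hn1' : n1 ≠ 0 := ne_of_gt hn1
  set a := lam0 * n2 with ha
  set b := lam0 * n1 with hb
  clear_value a b
  have hbpos : 0 < b := by rw [hb]; exact mul_pos h0 hn1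
  have hbne : b ≠ 0 := ne_of_gt hbpos
  have hab : a ^ 2 + b ^ 2 = lam0 ^ 2 := by
    rw [ha, hb]; nlinarith [hnorm]
  set K := 2 * a ^ 2 * π ^ 2 / 3 + 1 - π ^ 2 * lam0 ^ 2 / 3 with hK
  clear_value K
  set F := fun x : ℝ => π ^ 2 / 3 * x + (a * π ^ 2 / 3) * Real.log ((x - a) ^ 2 + b ^ 2)
      + (K / b) * Real.arctan ((x - a) / b) with hF
  have hQpos : ∀ x : ℝ, 0 < (x - a) ^ 2 + b ^ 2 := by
    intro x; positivity
  have hDeq : ∀ x : ℝ, x ^ 2 - 2 * lam0 * n2 * x + lam0 ^ 2 = (x - a) ^ 2 + b ^ 2 := by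
    intro x; linear_combination (2 * x) * ha - hab
  have hderiv : ∀ x ∈ Set.uIcc (0:ℝ) (1/2), HasDerivAt F
      ((1 + π ^ 2 * x ^ 2 / 3) / (x ^ 2 - 2 * lam0 * n2 * x + lam0 ^ 2)) x := by
    intro x _
    have h1 : HasDerivAt (fun x : ℝ => (x - a) ^ 2 + b ^ 2) (2 * (x - a)) x := by
      have := (((hasDerivAt_id x).sub_const a).pow 2).add_const (b ^ 2)
      simpa using this
    have hlog : HasDerivAt (fun x : ℝ => Real.log ((x - a) ^ 2 + b ^ 2))
        (2 * (x - a) / ((x - a) ^ 2 + b ^ 2)) x := h1.log (ne_of_gt (hQpos x))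
    have hinner : HasDerivAt (fun x : ℝ => (x - a) / b) (1 / b) x := by
      simpa using ((hasDerivAt_id x).sub_const a).div_const b
    have harc : HasDerivAt (fun x : ℝ => Real.arctan ((x - a) / b))
        (1 / (1 + ((x - a) / b) ^ 2) * (1 / b)) x :=
      by have := (Real.hasDerivAt_arctan ((x - a) / b)).comp x hinner; exact this
    have hsum : HasDerivAt F
        (π ^ 2 / 3 + (a * π ^ 2 / 3) * (2 * (x - a) / ((x - a) ^ 2 + b ^ 2))
          + (K / b) * (1 / (1 + ((x - a) / b) ^ 2) * (1 / b))) x := by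
      have hlin : HasDerivAt (fun x : ℝ => π ^ 2 / 3 * x) (π ^ 2 / 3) x := by
        simpa using (hasDerivAt_id x).const_mul (π ^ 2 / 3)
      exact (hlin.add (hlog.const_mul (a * π ^ 2 / 3))).add (harc.const_mul (K / b))
    convert hsum using 1
    have hKq : K = 2 * a ^ 2 * π ^ 2 / 3 + 1 - π ^ 2 * (a ^ 2 + b ^ 2) / 3 := by
      rw [hK, hab]
    have hQ := hQpos x
    have hQne : ((x - a) ^ 2 + b ^ 2) ≠ 0 := ne_of_gt hQ
    have h1b : 1 + ((x - a) / b) ^ 2 = ((x - a) ^ 2 + b ^ 2) / b ^ 2 := by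
      field_simp
      ring
    rw [hDeq x, h1b, hKq]
    field_simp
    ring
  have hcont : IntervalIntegrable
      (fun x : ℝ => (1 + π ^ 2 * x ^ 2 / 3) / (x ^ 2 - 2 * lam0 * n2 * x + lam0 ^ 2))
      MeasureTheory.volume 0 (1/2) := by
    apply Continuous.intervalIntegrable
    apply Continuous.div
    · exact continuous_const.add ((continuous_const.mul (continuous_pow 2)).div_const 3)
    · exact ((continuous_pow 2).sub (continuous_const.mul continuous_id)).add continuous_const
    · intro x
      rw [hDeq x]
      exact ne_of_gt (hQpos x)
  rw [intervalIntegral.integral_eq_sub_of_hasDerivAt hderiv hcont]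
  have harg1 : ((1:ℝ)/2 - a) / b = 1 / (2 * lam0 * n1) - n2 / n1 := by
    rw [ha, hb]; field_simp
  have harg0 : ((0:ℝ) - a) / b = -(n2 / n1) := by
    rw [ha, hb, zero_sub, neg_div, mul_div_mul_left _ _ h0']
  have hQhalf : ((1:ℝ)/2 - a) ^ 2 + b ^ 2 = (1 - n2 / lam0 + 1 / (4 * lam0 ^ 2)) * lam0 ^ 2 := by
    rw [ha, hb]
    field_simp
    linear_combination (16 * lam0 ^ 2) * hnorm
  have hargpos : 0 < 1 - n2 / lam0 + 1 / (4 * lam0 ^ 2) := by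
    have h := hQpos (1/2)
    rw [hQhalf] at h
    nlinarith [h, sq_nonneg lam0]
  have hloghalf : Real.log (((1:ℝ)/2 - a) ^ 2 + b ^ 2)
      = Real.log (1 - n2 / lam0 + 1 / (4 * lam0 ^ 2)) + Real.log (lam0 ^ 2) := by
    rw [hQhalf, Real.log_mul (ne_of_gt hargpos) (by positivity)]
  have hlog0 : Real.log (((0:ℝ) - a) ^ 2 + b ^ 2) = Real.log (lam0 ^ 2) := by
    rw [show ((0:ℝ) - a) ^ 2 + b ^ 2 = lam0 ^ 2 by linear_combination hab]
  rw [hF]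
  simp only
  rw [harg1, harg0, hloghalf, hlog0, Real.arctan_neg]
  rw [hK, ha, hb]
  field_simp
  ring
end
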